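/- arXiv:1908.10723 — 8 statements merged into one kernel-verified Lean document; each statement's English description precedes it below -/
import Mathlib

section
/- There exists an absolute constant C > 0 such that the following holds. Let E ⊆ ℂ be any set, let p be a prime, let d ≥ 2, and let F : ℕ × ℝ → ℝ be such that every function h : ℤ/pℤ → E ∪ {0} satisfies ‖ĥ‖₁ ≥ F(p, |supp h| · p^{-1}). Then for every function f : (ℤ/pℤ)^d → E ∪ {0} with |supp f| = δp^d and δ ≥ C p^{-1}, there exists δ' with δ'p an integer and |δ' − δ| ≤ C δ^{1/2} p^{-1/2} such that ‖f̂‖₁ ≥ F(p, δ'). -/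
open scoped BigOperators

/-- Fourier transform of `f : ZMod p → ℂ`. -/
noncomputable def ft1 {p : ℕ} [NeZero p] (f : ZMod p → ℂ) (ξ : ZMod p) : ℂ :=
  (p : ℂ)⁻¹ * ∑ x : ZMod p,
    f x * Complex.exp (-(2 * Real.pi * Complex.I) * ((ξ * x).val : ℂ) / p)

/-- Wiener norm of `f : ZMod p → ℂ`. -/
noncomputable def wiener1 {p : ℕ} [NeZero p] (f : ZMod p → ℂ) : ℝ :=
  ∑ ξ : ZMod p, ‖ft1 f ξ‖

/-- Fourier transform of `f : (ZMod p)^d → ℂ`. -/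
noncomputable def ftd {p d : ℕ} [NeZero p] (f : (Fin d → ZMod p) → ℂ) (ξ : Fin d → ZMod p) : ℂ :=
  ((p : ℂ) ^ d)⁻¹ * ∑ x : Fin d → ZMod p,
    f x * Complex.exp (-(2 * Real.pi * Complex.I) * (((∑ i, ξ i * x i : ZMod p)).val : ℂ) / p)

/-- Wiener norm of `f : (ZMod p)^d → ℂ`. -/
noncomputable def wienerd {p d : ℕ} [NeZero p] (f : (Fin d → ZMod p) → ℂ) : ℝ :=
  ∑ ξ : Fin d → ZMod p, ‖ftd f ξ‖


open Finset Complex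

section helpers
set_option linter.unusedSectionVars false

variable {p : ℕ} [NeZero p]

lemma sum_psi' {u : ZMod p} (hu : u ≠ 0) :
    ∑ t : ZMod p, ZMod.stdAddChar (u * t) = 0 := by
  have h1 : (ZMod.stdAddChar (N := p)).mulShift u ≠ 1 :=
    ZMod.isPrimitive_stdAddChar p hu
  simpa using AddChar.sum_eq_zero_of_ne_one h1

lemma sum_psi_ite (u : ZMod p) :
    ∑ t : ZMod p, ZMod.stdAddChar (u * t) = if u = 0 then (p : ℂ) else 0 := by
  split_ifs with h
  · simp [h, ZMod.card]
  · exact sum_psi' h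

open Finset Complex





lemma psi_one_ne_one [Fact p.Prime] : ZMod.stdAddChar (1 : ZMod p) ≠ 1 := by
  intro h
  have h0 : ZMod.stdAddChar (1 : ZMod p) = ZMod.stdAddChar (0 : ZMod p) := by
    simpa using h
  have := ZMod.injective_stdAddChar h0
  exact one_ne_zero this

lemma sum_psi_d [Fact p.Prime] {d : ℕ} {z : Fin d → ZMod p} (hz : z ≠ 0) :
    ∑ η : Fin d → ZMod p, ZMod.stdAddChar (∑ i, η i * z i) = 0 := by
  obtain ⟨i0, hi0⟩ : ∃ i, z i ≠ 0 := by
    by_contra h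
    push_neg at h
    exact hz (funext h)
  set v0 : Fin d → ZMod p := Function.update (0 : Fin d → ZMod p) i0 (z i0)⁻¹ with hv0
  have key : ∀ η : Fin d → ZMod p,
      ∑ i, (η i + v0 i) * z i = (∑ i, η i * z i) + 1 := by
    intro η
    have : ∑ i, v0 i * z i = 1 := by
      rw [Finset.sum_eq_single i0]
      · simp [hv0, inv_mul_cancel₀ hi0]
      · intro b _ hb; simp [hv0, Function.update_of_ne hb]
      · simp
    rw [← this, ← Finset.sum_add_distrib]
    congr 1; ext i; ring
  set S := ∑ η : Fin d → ZMod p, ZMod.stdAddChar (∑ i, η i * z i) with hS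
  have hshift : S = ZMod.stdAddChar (1 : ZMod p) * S := by
    calc S = ∑ η : Fin d → ZMod p, ZMod.stdAddChar (∑ i, (η i + v0 i) * z i) := by
            rw [hS]
            exact (Fintype.sum_equiv (Equiv.addRight v0) _ _ (fun η => rfl)).symm
    _ = ∑ η : Fin d → ZMod p, ZMod.stdAddChar (1 : ZMod p) * ZMod.stdAddChar (∑ i, η i * z i) := by
            refine Finset.sum_congr rfl fun η _ => ?_
            rw [key η, AddChar.map_add_eq_mul, mul_comm]
    _ = _ := by rw [← Finset.mul_sum]
  have : (ZMod.stdAddChar (1 : ZMod p) - 1) * S = 0 := by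
    rw [sub_mul, one_mul, ← hshift, sub_self]
  rcases mul_eq_zero.1 this with h | h
  · exact absurd (sub_eq_zero.1 h) psi_one_ne_one
  · exact h

lemma sum_psi_d_ite [Fact p.Prime] {d : ℕ} (z : Fin d → ZMod p) :
    ∑ η : Fin d → ZMod p, ZMod.stdAddChar (∑ i, η i * z i)
      = if z = 0 then ((p : ℂ) ^ d) else 0 := by
  split_ifs with h
  · subst h
    simp [Finset.card_univ, ZMod.card]
  · exact sum_psi_d h


lemma expform (u : ZMod p) :
    Complex.exp (-(2 * Real.pi * Complex.I) * ((u.val : ℕ) : ℂ) / p) = ZMod.stdAddChar (-u) := by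
  have : -u = (((-(u.val : ℤ)) : ℤ) : ZMod p) := by
    push_cast [ZMod.natCast_val, ZMod.intCast_cast]; simp [ZMod.natCast_val]
  rw [this, ZMod.stdAddChar_coe]
  congr 1; push_cast; ring


lemma ftd_eq {d : ℕ} (f : (Fin d → ZMod p) → ℂ) (ξ : Fin d → ZMod p) :
    ftd f ξ = ((p : ℂ) ^ d)⁻¹ * ∑ x, f x * ZMod.stdAddChar (-(∑ i, ξ i * x i)) := by
  unfold ftd
  congr 1
  refine Finset.sum_congr rfl fun x _ => ?_
  rw [← expform]

lemma ft1_eq (f : ZMod p → ℂ) (ξ : ZMod p) :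
    ft1 f ξ = (p : ℂ)⁻¹ * ∑ x, f x * ZMod.stdAddChar (-(ξ * x)) := by
  unfold ft1
  congr 1
  refine Finset.sum_congr rfl fun x _ => ?_
  rw [← expform]

lemma inversion [Fact p.Prime] {d : ℕ} (f : (Fin d → ZMod p) → ℂ) (x : Fin d → ZMod p) :
    ∑ η : Fin d → ZMod p, ftd f η * ZMod.stdAddChar (∑ i, η i * x i) = f x := by
  have hp : ((p : ℂ) ^ d) ≠ 0 :=
    pow_ne_zero _ (Nat.cast_ne_zero.2 (NeZero.ne p))
  calc ∑ η : Fin d → ZMod p, ftd f η * ZMod.stdAddChar (∑ i, η i * x i)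
      = ((p : ℂ) ^ d)⁻¹ * ∑ η : Fin d → ZMod p, ∑ y : Fin d → ZMod p,
          f y * ZMod.stdAddChar (∑ i, η i * (x i - y i)) := by
        rw [Finset.mul_sum]
        refine Finset.sum_congr rfl fun η _ => ?_
        rw [ftd_eq, mul_assoc, Finset.sum_mul]
        congr 1
        refine Finset.sum_congr rfl fun y _ => ?_
        rw [mul_assoc]
        congr 1
        rw [← AddChar.map_add_eq_mul]
        congr 1
        rw [← Finset.sum_neg_distrib, ← Finset.sum_add_distrib]
        refine Finset.sum_congr rfl fun i _ => ?_
        ring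
    _ = ((p : ℂ) ^ d)⁻¹ * ∑ y : Fin d → ZMod p,
          f y * ∑ η : Fin d → ZMod p, ZMod.stdAddChar (∑ i, η i * (x i - y i)) := by
        rw [Finset.sum_comm]
        congr 1
        refine Finset.sum_congr rfl fun y _ => ?_
        rw [Finset.mul_sum]
    _ = ((p : ℂ) ^ d)⁻¹ * ∑ y : Fin d → ZMod p,
          f y * (if (fun i => x i - y i) = 0 then ((p:ℂ)^d) else 0) := by
        congr 1
        refine Finset.sum_congr rfl fun y _ => ?_
        rw [sum_psi_d_ite]
    _ = f x := by
        rw [Finset.sum_congr rfl (fun y _ => ?_), Finset.sum_ite_eq' Finset.univ x (fun y => f y * (p:ℂ)^d)]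
        · simp [hp, mul_comm]
        · have : ((fun i => x i - y i) = 0) ↔ (y = x) := by
            constructor
            · intro h; funext i
              have := congrFun h i
              simpa [sub_eq_zero, eq_comm] using this
            · intro h; subst h; funext i; simp
          simp only [this]
          by_cases h : y = x <;> simp [h]



lemma ft1_slice [Fact p.Prime] {d : ℕ} (f : (Fin d → ZMod p) → ℂ)
    (v a : Fin d → ZMod p) (ξ : ZMod p) :
    ft1 (fun t => f (fun i => a i + t * v i)) ξ
      = ∑ η ∈ Finset.univ.filter (fun η : Fin d → ZMod p => ∑ i, η i * v i = ξ),
          ftd f η * ZMod.stdAddChar (∑ i, η i * a i) := by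
  have hp : (p : ℂ) ≠ 0 := Nat.cast_ne_zero.2 (NeZero.ne p)
  rw [ft1_eq]
  calc (p : ℂ)⁻¹ * ∑ t, (fun t => f (fun i => a i + t * v i)) t * ZMod.stdAddChar (-(ξ * t))
      = (p : ℂ)⁻¹ * ∑ t, ∑ η : Fin d → ZMod p,
          ftd f η * ZMod.stdAddChar (∑ i, η i * a i)
            * ZMod.stdAddChar (((∑ i, η i * v i) - ξ) * t) := by
        congr 1
        refine Finset.sum_congr rfl fun t _ => ?_
        show f (fun i => a i + t * v i) * ZMod.stdAddChar (-(ξ * t)) = _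
        conv_lhs => rw [← inversion f (fun i => a i + t * v i)]
        rw [Finset.sum_mul]
        refine Finset.sum_congr rfl fun η _ => ?_
        rw [mul_assoc, mul_assoc]
        congr 1
        rw [← AddChar.map_add_eq_mul, ← AddChar.map_add_eq_mul]
        congr 1
        rw [show ∑ i, η i * (a i + t * v i) = (∑ i, η i * a i) + (∑ i, η i * v i) * t by
          rw [Finset.sum_mul, ← Finset.sum_add_distrib]
          exact Finset.sum_congr rfl fun i _ => by ring]
        ring
    _ = ∑ η : Fin d → ZMod p, ftd f η * ZMod.stdAddChar (∑ i, η i * a i)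
          * ((p : ℂ)⁻¹ * ∑ t, ZMod.stdAddChar (((∑ i, η i * v i) - ξ) * t)) := by
        rw [Finset.sum_comm, Finset.mul_sum]
        refine Finset.sum_congr rfl fun η _ => ?_
        simp only [Finset.mul_sum]
        refine Finset.sum_congr rfl fun t _ => ?_
        ring
    _ = ∑ η : Fin d → ZMod p, (if (∑ i, η i * v i) = ξ then
          ftd f η * ZMod.stdAddChar (∑ i, η i * a i) else 0) := by
        refine Finset.sum_congr rfl fun η _ => ?_
        rw [sum_psi_ite]
        by_cases h : (∑ i, η i * v i) = ξ
        · rw [if_pos (sub_eq_zero.2 h), if_pos h, inv_mul_cancel₀ hp, mul_one]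
        · rw [if_neg (fun hh => h (sub_eq_zero.1 hh)), if_neg h, mul_zero, mul_zero]
    _ = _ := by rw [Finset.sum_filter]

lemma psi_abs (x : ZMod p) : ‖ZMod.stdAddChar x‖ = 1 := by
  rw [ZMod.stdAddChar_apply]
  exact Circle.norm_coe _

lemma wiener_slice [Fact p.Prime] {d : ℕ} (f : (Fin d → ZMod p) → ℂ)
    (v a : Fin d → ZMod p) :
    wiener1 (fun t => f (fun i => a i + t * v i)) ≤ wienerd f := by
  unfold wiener1 wienerd
  calc ∑ ξ : ZMod p, ‖ft1 (fun t => f (fun i => a i + t * v i)) ξ‖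
      ≤ ∑ ξ : ZMod p, ∑ η ∈ Finset.univ.filter (fun η : Fin d → ZMod p => ∑ i, η i * v i = ξ),
          ‖ftd f η‖ := by
        refine Finset.sum_le_sum fun ξ _ => ?_
        rw [ft1_slice]
        refine le_trans (norm_sum_le _ _) ?_
        refine le_of_eq (Finset.sum_congr rfl fun η _ => ?_)
        rw [norm_mul, psi_abs, mul_one]
    _ = ∑ η : Fin d → ZMod p, ‖ftd f η‖ :=
        Finset.sum_fiberwise _ _ _


section comb

variable {p d : ℕ} [NeZero p] [Fact p.Prime] (i0 : Fin d) (f : (Fin d → ZMod p) → ℂ)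

def lmap (v a : Fin d → ZMod p) (t : ZMod p) : Fin d → ZMod p := fun i => a i + t * v i

lemma card_fiber (c : ZMod p) :
    (univ.filter fun v : Fin d → ZMod p => v i0 = c).card * p = p ^ d := by
  have key : ((univ.filter fun v : Fin d → ZMod p => v i0 = c) ×ˢ (univ : Finset (ZMod p))).card
      = (univ : Finset (Fin d → ZMod p)).card := by
    apply Finset.card_nbij' (fun q => Function.update q.1 i0 q.2)
      (fun x => (Function.update x i0 c, x i0))
    · intro q _; exact mem_univ _
    · intro x _
      simp [Finset.mem_product]
    · intro q hq
      simp only [Finset.mem_coe, Finset.mem_product, mem_filter] at hq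
      have h1 : q.1 i0 = c := hq.1.2
      refine Prod.ext ?_ ?_
      · show Function.update (Function.update q.1 i0 q.2) i0 c = q.1
        rw [Function.update_idem, ← h1, Function.update_eq_self]
      · show (Function.update q.1 i0 q.2) i0 = q.2
        simp
    · intro x _
      show Function.update (Function.update x i0 c) i0 (x i0) = x
      rw [Function.update_idem, Function.update_eq_self]
  rw [Finset.card_product, Finset.card_univ, ZMod.card] at key
  rw [key, Finset.card_univ]
  simp [ZMod.card]

lemma card_fiber' (hd : 1 ≤ d) (c : ZMod p) :
    (univ.filter fun v : Fin d → ZMod p => v i0 = c).card = p ^ (d - 1) := by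
  have hp : p ≠ 0 := NeZero.ne p
  have h2 : p ^ d = p ^ (d - 1) * p := by
    conv_lhs => rw [show d = (d-1) + 1 by omega]
    rw [pow_succ]
  exact Nat.eq_of_mul_eq_mul_right (Nat.pos_of_ne_zero hp) (by rw [card_fiber, h2])

lemma rowsum {v : Fin d → ZMod p} (hv : v i0 = 1) :
    ∑ a ∈ univ.filter (fun a : Fin d → ZMod p => a i0 = 0),
        (univ.filter fun t : ZMod p => f (lmap v a t) ≠ 0).card
      = (univ.filter fun x => f x ≠ 0).card := by
  simp only [Finset.card_filter]
  rw [← Finset.sum_product']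
  apply Finset.sum_nbij' (fun q => lmap v q.1 q.2)
    (fun x => ((fun i => x i - x i0 * v i), x i0))
  · intro q _; exact mem_univ _
  · intro x _
    simp only [Finset.mem_product, mem_filter, mem_univ, true_and]
    constructor
    · rw [hv]; ring
    · trivial
  · intro q hq
    simp only [Finset.mem_product, mem_filter, mem_univ, true_and] at hq
    have h1 : q.1 i0 = 0 := hq.1
    have h2 : lmap v q.1 q.2 i0 = q.2 := by simp [lmap, h1, hv]
    refine Prod.ext ?_ ?_
    · funext i
      show lmap v q.1 q.2 i - lmap v q.1 q.2 i0 * v i = q.1 i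
      rw [h2]; simp [lmap]
    · exact h2
  · intro x _
    funext i
    show (x i - x i0 * v i) + x i0 * v i = x i
    ring
  · intro q _; rfl

end comb

section comb2

variable {p d : ℕ} [NeZero p] [Fact p.Prime] (i0 : Fin d) (f : (Fin d → ZMod p) → ℂ)

abbrev Vset (p : ℕ) [NeZero p] {d : ℕ} (i0 : Fin d) : Finset (Fin d → ZMod p) :=
  univ.filter fun v => v i0 = 1
abbrev Aset (p : ℕ) [NeZero p] {d : ℕ} (i0 : Fin d) : Finset (Fin d → ZMod p) :=
  univ.filter fun a => a i0 = 0

noncomputable def ncount (v a : Fin d → ZMod p) : ℕ :=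
  (univ.filter fun t : ZMod p => f (lmap v a t) ≠ 0).card

noncomputable def Nsupp : ℕ := (univ.filter fun x => f x ≠ 0).card

lemma sumsq_le :
    ∑ v ∈ Vset p i0, ∑ a ∈ Aset p i0, (ncount f v a)^2
      ≤ (Vset p i0).card * Nsupp f + Nsupp f * Nsupp f := by
  classical
  set ind : (Fin d → ZMod p) → (Fin d → ZMod p) → ZMod p → ℕ :=
    fun v a t => if f (lmap v a t) ≠ 0 then 1 else 0 with hind
  have hsq : ∀ v a, (ncount f v a)^2
      = (∑ t : ZMod p, ind v a t) * (∑ s : ZMod p, ind v a s) := by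
    intro v a; rw [sq, ncount, Finset.card_filter]
  have split : ∀ v a, (ncount f v a)^2
      = ncount f v a + ∑ t : ZMod p, ∑ s : ZMod p,
          (if t ≠ s ∧ f (lmap v a t) ≠ 0 ∧ f (lmap v a s) ≠ 0 then 1 else 0) := by
    intro v a
    rw [hsq, Finset.sum_mul_sum]
    have : ∀ t s : ZMod p, ind v a t * ind v a s
        = (if t = s then ind v a t else 0)
          + (if t ≠ s ∧ f (lmap v a t) ≠ 0 ∧ f (lmap v a s) ≠ 0 then 1 else 0) := by
      intro t s
      by_cases hts : t = s
      · subst hts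
        simp only [if_pos rfl, hind]
        by_cases h : f (lmap v a t) ≠ 0 <;> simp [h]
      · simp only [if_neg hts, hind]
        by_cases h1 : f (lmap v a t) ≠ 0 <;> by_cases h2 : f (lmap v a s) ≠ 0 <;>
          simp [h1, h2, hts]
    rw [Finset.sum_congr rfl fun t _ => Finset.sum_congr rfl fun s _ => this t s]
    rw [Finset.sum_congr rfl fun t _ => Finset.sum_add_distrib]
    rw [Finset.sum_add_distrib]
    congr 1
    rw [ncount, Finset.card_filter]
    refine Finset.sum_congr rfl fun t _ => ?_
    simp [hind]
  calc ∑ v ∈ Vset p i0, ∑ a ∈ Aset p i0, (ncount f v a)^2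
      = (∑ v ∈ Vset p i0, ∑ a ∈ Aset p i0, ncount f v a)
        + ∑ v ∈ Vset p i0, ∑ a ∈ Aset p i0, ∑ t : ZMod p, ∑ s : ZMod p,
            (if t ≠ s ∧ f (lmap v a t) ≠ 0 ∧ f (lmap v a s) ≠ 0 then 1 else 0) := by
        rw [← Finset.sum_add_distrib]
        refine Finset.sum_congr rfl fun v _ => ?_
        rw [← Finset.sum_add_distrib]
        exact Finset.sum_congr rfl fun a _ => split v a
    _ ≤ (Vset p i0).card * Nsupp f + Nsupp f * Nsupp f := by
        gcongr ?_ + ?_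
        · have hrow : ∀ v ∈ Vset p i0, ∑ a ∈ Aset p i0, ncount f v a = Nsupp f :=
            fun v hv => rowsum i0 f ((Finset.mem_filter.1 hv).2)
          rw [Finset.sum_congr rfl hrow, Finset.sum_const, smul_eq_mul]
        · -- off-diagonal count
          classical
          set B := (((Vset p i0) ×ˢ (Aset p i0)) ×ˢ ((univ : Finset (ZMod p)) ×ˢ univ)).filter
              (fun q => q.2.1 ≠ q.2.2 ∧ f (lmap q.1.1 q.1.2 q.2.1) ≠ 0
                ∧ f (lmap q.1.1 q.1.2 q.2.2) ≠ 0) with hB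
          have hcard : ∑ v ∈ Vset p i0, ∑ a ∈ Aset p i0, ∑ t : ZMod p, ∑ s : ZMod p,
              (if t ≠ s ∧ f (lmap v a t) ≠ 0 ∧ f (lmap v a s) ≠ 0 then 1 else 0) = B.card := by
            rw [hB, Finset.card_filter, Finset.sum_product, Finset.sum_product]
            refine Finset.sum_congr rfl fun v _ => Finset.sum_congr rfl fun a _ => ?_
            rw [Finset.sum_product]
          rw [hcard]
          have hinj : B.card ≤ ((univ.filter fun x => f x ≠ 0) ×ˢ
              (univ.filter fun x => f x ≠ 0)).card := by
            apply Finset.card_le_card_of_injOn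
              (fun q => (lmap q.1.1 q.1.2 q.2.1, lmap q.1.1 q.1.2 q.2.2))
            · intro q hq
              rw [hB, Finset.mem_coe, Finset.mem_filter] at hq
              simp only [Finset.mem_coe, Finset.mem_product, Finset.mem_filter, Finset.mem_univ, true_and]
              exact ⟨hq.2.2.1, hq.2.2.2⟩
            · intro q hq q' hq' heq
              rw [hB, Finset.mem_coe, Finset.mem_filter, Finset.mem_product,
                Finset.mem_product] at hq hq'
              obtain ⟨⟨⟨hv, ha⟩, -⟩, hts, -, -⟩ := hq
              obtain ⟨⟨⟨hv', ha'⟩, -⟩, hts', -, -⟩ := hq'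
              rw [Finset.mem_filter] at hv ha hv' ha'
              have hv1 : q.1.1 i0 = 1 := hv.2
              have hv1' : q'.1.1 i0 = 1 := hv'.2
              have ha1 : q.1.2 i0 = 0 := ha.2
              have ha1' : q'.1.2 i0 = 0 := ha'.2
              have h1 : lmap q.1.1 q.1.2 q.2.1 = lmap q'.1.1 q'.1.2 q'.2.1 :=
                congrArg Prod.fst heq
              have h2 : lmap q.1.1 q.1.2 q.2.2 = lmap q'.1.1 q'.1.2 q'.2.2 :=
                congrArg Prod.snd heq
              have ht : q.2.1 = q'.2.1 := by
                have := congrFun h1 i0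
                simpa [lmap, ha1, ha1', hv1, hv1'] using this
              have hs : q.2.2 = q'.2.2 := by
                have := congrFun h2 i0
                simpa [lmap, ha1, ha1', hv1, hv1'] using this
              have hvv : q.1.1 = q'.1.1 := by
                funext i
                have e1 := congrFun h1 i
                have e2 := congrFun h2 i
                simp only [lmap] at e1 e2
                rw [← ht] at e1
                rw [← hs] at e2
                have e3 : (q.2.1 - q.2.2) * q.1.1 i = (q.2.1 - q.2.2) * q'.1.1 i := by
                  linear_combination e1 - e2
                exact mul_left_cancel₀ (sub_ne_zero.2 hts) e3
              have haa : q.1.2 = q'.1.2 := by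
                funext i
                have e1 := congrFun h1 i
                simp only [lmap] at e1
                rw [← ht] at e1
                rw [hvv] at e1
                exact add_right_cancel e1
              exact Prod.ext (Prod.ext hvv haa) (Prod.ext ht hs)
          calc B.card ≤ _ := hinj
            _ = Nsupp f * Nsupp f := by rw [Finset.card_product]; rfl

end comb2


end helpers

/-- There is an absolute constant `C > 0` such that: if every
`h : ZMod p → E ∪ {0}` satisfies `‖ĥ‖₁ ≥ F(p, |supp h|/p)`, then every
`f : (ZMod p)^d → E ∪ {0}` (`d ≥ 2`) with `|supp f| = δ p^d`, `δ ≥ C p⁻¹`, satisfies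
`‖f̂‖₁ ≥ F(p, δ')` for some `δ'` with `δ' p ∈ ℤ` and `|δ' - δ| ≤ C δ^{1/2} p^{-1/2}`. -/
theorem stmt3 :
    ∃ C > (0:ℝ), ∀ (E : Set ℂ) (p : ℕ) [Fact p.Prime] (d : ℕ), 2 ≤ d →
      ∀ F : ℕ × ℝ → ℝ,
        (∀ h : ZMod p → ℂ, (∀ x, h x ∈ E ∪ {0}) →
          F (p, ((Function.support h).ncard : ℝ) / p) ≤ wiener1 h) →
        ∀ (f : (Fin d → ZMod p) → ℂ) (δ : ℝ),
          (∀ x, f x ∈ E ∪ {0}) →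
          ((Function.support f).ncard : ℝ) = δ * (p : ℝ) ^ d →
          C * (p : ℝ)⁻¹ ≤ δ →
          ∃ δ' : ℝ, (∃ m : ℤ, δ' * p = (m : ℝ)) ∧
            |δ' - δ| ≤ C * δ ^ ((1:ℝ)/2) * (p : ℝ) ^ (-(1:ℝ)/2) ∧
            F (p, δ') ≤ wienerd f := by
  classical
  refine ⟨1, one_pos, ?_⟩
  intro E p _ d hd F hF f δ hfE hsupp hδ
  have hpprime : p.Prime := Fact.out
  have hp0 : (0:ℝ) < p := by exact_mod_cast hpprime.pos
  have hδ0 : 0 ≤ δ := le_trans (by positivity) hδ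
  set i0 : Fin d := ⟨0, by omega⟩ with hi0
  set N : ℕ := Nsupp f with hN
  have hNcard : ((Function.support f).ncard : ℝ) = (N : ℝ) := by
    have hsupp_eq : Function.support f = ↑(Finset.univ.filter fun x => f x ≠ 0) := by
      ext x; simp [Function.mem_support]
    rw [hsupp_eq, Set.ncard_coe_finset]
    rfl
  have hNδ : (N : ℝ) = δ * (p : ℝ) ^ d := by rw [← hNcard, hsupp]
  set K : ℕ := p ^ (d - 1) with hK
  have hVcard : (Vset p i0).card = K := card_fiber' i0 (by omega) 1
  have hAcard : (Aset p i0).card = K := card_fiber' i0 (by omega) 0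
  have hpd : ((p : ℝ)) ^ d = (p : ℝ) ^ (d - 1) * p := by
    rw [← pow_succ]; congr 1; omega
  have hKR : ((K : ℝ)) = (p : ℝ) ^ (d - 1) := by push_cast [hK]; ring
  have hK0 : (0:ℝ) < K := by rw [hKR]; positivity
  have hNK : (N : ℝ) = δ * p * K := by rw [hNδ, hpd, hKR]; ring
  -- sum of counts
  have hsum1 : ∑ v ∈ Vset p i0, ∑ a ∈ Aset p i0, ncount f v a = K * N := by
    have hrow : ∀ v ∈ Vset p i0, ∑ a ∈ Aset p i0, ncount f v a = N :=
      fun v hv => rowsum i0 f ((Finset.mem_filter.1 hv).2)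
    rw [Finset.sum_congr rfl hrow, Finset.sum_const, smul_eq_mul, hVcard]
  have hsum2 : ∑ v ∈ Vset p i0, ∑ a ∈ Aset p i0, (ncount f v a) ^ 2
      ≤ K * N + N * N := by rw [← hVcard]; exact sumsq_le i0 f
  -- real versions over the product set
  set P : Finset ((Fin d → ZMod p) × (Fin d → ZMod p)) := Vset p i0 ×ˢ Aset p i0 with hP
  have hPcard : (P.card : ℝ) = (K : ℝ) * K := by
    rw [hP, Finset.card_product, hVcard, hAcard]; push_cast; ring
  have hsum1R : ∑ q ∈ P, ((ncount f q.1 q.2 : ℝ)) = (K : ℝ) * N := by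
    rw [hP, Finset.sum_product]
    exact_mod_cast congrArg (fun n : ℕ => (n : ℝ)) hsum1
  have hsum2R : ∑ q ∈ P, ((ncount f q.1 q.2 : ℝ)) ^ 2 ≤ (K : ℝ) * N + (N : ℝ) * N := by
    rw [hP, Finset.sum_product]
    calc (∑ v ∈ Vset p i0, ∑ a ∈ Aset p i0, ((ncount f v a : ℝ)) ^ 2)
        = ((∑ v ∈ Vset p i0, ∑ a ∈ Aset p i0, (ncount f v a) ^ 2 : ℕ) : ℝ) := by
          push_cast; rfl
      _ ≤ (((K * N + N * N : ℕ)) : ℝ) := by exact_mod_cast hsum2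
      _ = (K : ℝ) * N + (N : ℝ) * N := by push_cast; ring
  have hvarsum : ∑ q ∈ P, ((ncount f q.1 q.2 : ℝ) - δ * p) ^ 2 ≤ (K : ℝ) * N := by
    have expand : ∑ q ∈ P, ((ncount f q.1 q.2 : ℝ) - δ * p) ^ 2
        = (∑ q ∈ P, ((ncount f q.1 q.2 : ℝ)) ^ 2)
          - 2 * (δ * p) * (∑ q ∈ P, ((ncount f q.1 q.2 : ℝ)))
          + (δ * p) ^ 2 * P.card := by
      rw [Finset.sum_congr rfl (fun q _ => by ring :
        ∀ q ∈ P, ((ncount f q.1 q.2 : ℝ) - δ * p) ^ 2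
          = ((ncount f q.1 q.2 : ℝ)) ^ 2 - 2 * (δ * p) * (ncount f q.1 q.2 : ℝ)
            + (δ * p) ^ 2)]
      rw [Finset.sum_add_distrib, Finset.sum_sub_distrib, Finset.sum_const, ← Finset.mul_sum]
      push_cast
      ring
    rw [expand, hPcard, hsum1R]
    have e1 : 2 * (δ * p) * ((K:ℝ) * N) = 2 * ((N:ℝ) * N) := by rw [hNK]; ring
    have e2 : (δ * p) ^ 2 * ((K:ℝ) * K) = (N:ℝ) * N := by rw [hNK]; ring
    rw [e1, e2]
    linarith [hsum2R]
  -- extract a good line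
  have hPne : P.Nonempty := by
    refine ⟨⟨fun i => if i = i0 then 1 else 0, fun _ => 0⟩, ?_⟩
    rw [hP, Finset.mem_product]
    constructor <;> simp [Vset, Aset]
  obtain ⟨q, hqP, hq⟩ : ∃ q ∈ P, ((ncount f q.1 q.2 : ℝ) - δ * p) ^ 2 ≤ δ * p := by
    by_contra hcon
    push_neg at hcon
    have hlt : ∑ q ∈ P, (δ * p) < ∑ q ∈ P, ((ncount f q.1 q.2 : ℝ) - δ * p) ^ 2 :=
      Finset.sum_lt_sum_of_nonempty hPne hcon
    rw [Finset.sum_const, nsmul_eq_mul] at hlt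
    have : (P.card : ℝ) * (δ * p) = (K : ℝ) * N := by
      rw [hPcard, hNK]; ring
    rw [this] at hlt
    exact absurd hvarsum (not_le.2 hlt)
  set v : Fin d → ZMod p := q.1 with hv
  set a : Fin d → ZMod p := q.2 with ha
  have hqP' := hqP
  rw [hP, Finset.mem_product] at hqP'
  have hv1 : v i0 = 1 := (Finset.mem_filter.1 hqP'.1).2
  have ha0 : a i0 = 0 := (Finset.mem_filter.1 hqP'.2).2
  set n : ℕ := ncount f v a with hn
  set δ' : ℝ := (n : ℝ) / p with hδ'
  refine ⟨δ', ⟨(n : ℤ), by rw [hδ']; push_cast; field_simp⟩, ?_, ?_⟩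
  · -- distance bound
    have habs : |(n : ℝ) - δ * p| ≤ Real.sqrt (δ * p) := by
      rw [← Real.sqrt_sq_eq_abs]
      exact Real.sqrt_le_sqrt hq
    have hsqrtp : (0:ℝ) < Real.sqrt p := Real.sqrt_pos.2 hp0
    calc |δ' - δ| = |(n : ℝ) - δ * p| / p := by
          rw [hδ', show (n : ℝ) / p - δ = ((n : ℝ) - δ * p) / p by field_simp, abs_div,
            abs_of_pos hp0]
      _ ≤ Real.sqrt (δ * p) / p := by gcongr
      _ = Real.sqrt δ * Real.sqrt p / p := by rw [Real.sqrt_mul hδ0]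
      _ = Real.sqrt δ * (Real.sqrt p)⁻¹ := by
          field_simp
          rw [Real.sq_sqrt hp0.le]
      _ = 1 * δ ^ ((1:ℝ)/2) * (p : ℝ) ^ (-(1:ℝ)/2) := by
          rw [show (-(1:ℝ)/2) = -(1/2:ℝ) by ring, Real.rpow_neg hp0.le,
            ← Real.sqrt_eq_rpow, ← Real.sqrt_eq_rpow, one_mul]
  · -- Fourier bound
    have hind : δ' = ((Function.support fun t => f (fun i => a i + t * v i)).ncard : ℝ) / p := by
      have hsupp_eq : (Function.support fun t => f (fun i => a i + t * v i))
          = ↑(Finset.univ.filter fun t : ZMod p => f (lmap v a t) ≠ 0) := by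
        ext t; unfold lmap; simp [Function.mem_support]
      rw [hsupp_eq, Set.ncard_coe_finset, hδ']
      rfl
    calc F (p, δ') ≤ wiener1 (fun t => f (fun i => a i + t * v i)) := by
          rw [hind]; exact hF _ (fun t => hfE _)
      _ ≤ wienerd f := wiener_slice f v a
end

section
/- Let E ⊆ ℂ be a set invariant under rotations (e^{iφ}E = E for all real φ), let p be a prime, d ≥ 1, n a positive integer with n < (2p)^{1/2}, and let F : ℕ × ℝ → ℝ be such that every function h : ℤ/pℤ → E ∪ {0} with |supp h| = n satisfies ‖ĥ‖₁ ≥ F(p, n/p). Then every function f : (ℤ/pℤ)^d → E ∪ {0} with |supp f| = n satisfies ‖f̂‖₁ ≥ F(p, n/p). -/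
open scoped BigOperators

noncomputable def eC (p : ℕ) [NeZero p] (m : ZMod p) : ℂ :=
  Complex.exp (-(2 * Real.pi * Complex.I) * (m.val : ℂ) / p)

lemma eC_add {p : ℕ} [NeZero p] (m n : ZMod p) : eC p (m + n) = eC p m * eC p n := by
  have hp : (p : ℂ) ≠ 0 := Nat.cast_ne_zero.2 (NeZero.ne p)
  have hval : ((m.val : ℂ) + n.val) = ((m + n).val : ℂ) + p * ((m.val + n.val) / p : ℕ) := by
    have h : m.val + n.val = (m + n).val + p * ((m.val + n.val) / p) := by
      rw [ZMod.val_add]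
      exact (Nat.mod_add_div (m.val + n.val) p).symm
    have h2 := congrArg (fun k : ℕ => (k : ℂ)) h
    push_cast at h2
    convert h2 using 2
  rw [eC, eC, eC, ← Complex.exp_add,
    show -(2 * (Real.pi : ℂ) * Complex.I) * (m.val : ℂ) / p
        + -(2 * (Real.pi : ℂ) * Complex.I) * (n.val : ℂ) / p
      = -(2 * (Real.pi : ℂ) * Complex.I) * ((m.val : ℂ) + n.val) / p by ring,
    hval,
    show -(2 * (Real.pi : ℂ) * Complex.I) * (((m + n).val : ℂ) + p * ((m.val + n.val) / p : ℕ)) / p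
      = -(2 * (Real.pi : ℂ) * Complex.I) * (((m + n).val : ℂ)) / p
        + ((-(((m.val + n.val) / p : ℕ) : ℤ) : ℤ) : ℂ) * (2 * Real.pi * Complex.I) by
      rw [Int.cast_neg, Int.cast_natCast]; field_simp; ring,
    Complex.exp_add, Complex.exp_int_mul_two_pi_mul_I, mul_one]

lemma eC_eq (p : ℕ) [NeZero p] (m : ZMod p) :
    eC p m = Complex.exp (((-(2 * Real.pi * (m.val : ℝ) / p) : ℝ) : ℂ) * Complex.I) := by
  rw [eC]; congr 1; push_cast; ring

lemma card_hyperplane {p : ℕ} [Fact p.Prime] {d : ℕ} (v : Fin d → ZMod p) (hv : v ≠ 0) :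
    (Finset.univ.filter (fun a : Fin d → ZMod p => ∑ i, a i * v i = 0)).card = p ^ (d - 1) := by
  classical
  obtain ⟨j, hj⟩ : ∃ j, v j ≠ 0 := by
    by_contra h; push_neg at h; exact hv (funext h)
  let φ : (Fin d → ZMod p) →ₗ[ZMod p] ZMod p :=
    { toFun := fun a => ∑ i, a i * v i
      map_add' := by intro a b; simp [add_mul, Finset.sum_add_distrib]
      map_smul' := by intro c a; simp [Finset.mul_sum, mul_assoc] }
  have hsurj : Function.Surjective φ := by
    intro c
    refine ⟨Pi.single j (c * (v j)⁻¹), ?_⟩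
    simp only [φ, LinearMap.coe_mk, AddHom.coe_mk]
    rw [Finset.sum_eq_single j]
    · rw [Pi.single_eq_same, mul_assoc, inv_mul_cancel₀ hj, mul_one]
    · intro i _ hi; rw [Pi.single_eq_of_ne hi, zero_mul]
    · intro h; exact absurd (Finset.mem_univ j) h
  have hrank : Module.finrank (ZMod p) (LinearMap.ker φ) = d - 1 := by
    have h1 := LinearMap.finrank_range_add_finrank_ker φ
    rw [LinearMap.range_eq_top.2 hsurj, finrank_top, Module.finrank_self,
      Module.finrank_pi] at h1
    simp only [Fintype.card_fin] at h1
    omega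
  have hcard : Fintype.card (LinearMap.ker φ) = p ^ (d - 1) := by
    rw [Module.card_eq_pow_finrank (K := ZMod p), hrank, ZMod.card]
  rw [← hcard, ← Fintype.card_subtype]
  exact Fintype.card_congr (Equiv.subtypeEquivRight fun a => by
    simp [LinearMap.mem_ker, φ])

/-- Let `E ⊆ ℂ` be invariant under rotations, `p` prime, `d ≥ 1`,
`0 < n < √(2p)`. If every `h : ZMod p → E ∪ {0}` with `|supp h| = n` satisfies
`‖ĥ‖₁ ≥ F(p, n/p)`, then every `f : (ZMod p)^d → E ∪ {0}` with `|supp f| = n`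
satisfies `‖f̂‖₁ ≥ F(p, n/p)`. -/
theorem stmt4 (E : Set ℂ)
    (hE : ∀ φ : ℝ, (fun z => Complex.exp (φ * Complex.I) * z) '' E = E)
    (p : ℕ) [Fact p.Prime] (d : ℕ) (hd : 1 ≤ d)
    (n : ℕ) (hn : 0 < n) (hnp : (n : ℝ) < Real.sqrt (2 * p))
    (F : ℕ × ℝ → ℝ)
    (h1 : ∀ h : ZMod p → ℂ, (∀ x, h x ∈ E ∪ {0}) →
      (Function.support h).ncard = n → F (p, (n : ℝ) / p) ≤ wiener1 h)
    (f : (Fin d → ZMod p) → ℂ) (hf : ∀ x, f x ∈ E ∪ {0})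
    (hsupp : (Function.support f).ncard = n) :
    F (p, (n : ℝ) / p) ≤ wienerd f := by
  classical
  have hp2 : 2 ≤ p := (Fact.out : p.Prime).two_le
  have hpC : (p : ℂ) ≠ 0 := Nat.cast_ne_zero.2 (by omega)
  set S : Finset (Fin d → ZMod p) := Finset.univ.filter (fun x => f x ≠ 0) with hS
  have hS_eq : Function.support f = ↑S := by
    ext x; simp [hS, Function.mem_support]
  have hScard : S.card = n := by
    rw [← hsupp, hS_eq, Set.ncard_coe_finset]
  have hn2 : n * n < 2 * p := by
    have h := (Real.lt_sqrt (by positivity)).1 hnp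
    have h2 : ((n * n : ℕ) : ℝ) < ((2 * p : ℕ) : ℝ) := by push_cast; nlinarith
    exact_mod_cast h2
  -- Step A: choose a linear functional injective on the support
  obtain ⟨a, j, haj, hainj⟩ :
      ∃ (a : Fin d → ZMod p) (j : Fin d), a j ≠ 0 ∧
        ∀ x ∈ S, ∀ y ∈ S, (∑ i, a i * x i) = (∑ i, a i * y i) → x = y := by
    by_cases hpair : ∀ x ∈ S, ∀ y ∈ S, x = y
    · exact ⟨fun _ => 1, ⟨0, hd⟩, one_ne_zero, fun x hx y hy _ => hpair x hx y hy⟩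
    · push_neg at hpair
      obtain ⟨x₀, hx₀, y₀, hy₀, hxy₀⟩ := hpair
      set ι := Fintype.equivFin (Fin d → ZMod p) with hι
      set P : Finset ((Fin d → ZMod p) × (Fin d → ZMod p)) :=
        S.offDiag.filter (fun q => ι q.1 < ι q.2) with hP
      set P' : Finset ((Fin d → ZMod p) × (Fin d → ZMod p)) :=
        S.offDiag.filter (fun q => ι q.2 < ι q.1) with hP'
      have hιne : ∀ {x y : Fin d → ZMod p}, x ≠ y → ι x ≠ ι y :=
        fun hxy h => hxy (ι.injective h)
      have hsplit : S.offDiag = P ∪ P' := by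
        ext q
        simp only [Finset.mem_union, Finset.mem_filter, hP, hP']
        constructor
        · intro hq
          rcases lt_or_gt_of_ne (hιne (Finset.mem_offDiag.1 hq).2.2) with h | h
          · exact Or.inl ⟨hq, h⟩
          · exact Or.inr ⟨hq, h⟩
        · rintro (⟨hq, _⟩ | ⟨hq, _⟩) <;> exact hq
      have hdisj : Disjoint P P' := by
        rw [Finset.disjoint_left]
        intro q hq hq'
        rw [hP, Finset.mem_filter] at hq
        rw [hP', Finset.mem_filter] at hq'
        exact absurd (hq.2.trans hq'.2) (lt_irrefl _)
      have hcardPP' : P.card = P'.card := by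
        apply Finset.card_bij (fun q _ => (q.2, q.1))
        · intro q hq
          rw [hP, Finset.mem_filter, Finset.mem_offDiag] at hq
          rw [hP', Finset.mem_filter, Finset.mem_offDiag]
          exact ⟨⟨hq.1.2.1, hq.1.1, fun h => hq.1.2.2 h.symm⟩, hq.2⟩
        · intro q hq q' hq' h
          exact Prod.ext (congrArg Prod.snd h) (congrArg Prod.fst h)
        · intro q hq
          rw [hP', Finset.mem_filter, Finset.mem_offDiag] at hq
          refine ⟨(q.2, q.1), ?_, rfl⟩
          rw [hP, Finset.mem_filter, Finset.mem_offDiag]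
          exact ⟨⟨hq.1.2.1, hq.1.1, fun h => hq.1.2.2 h.symm⟩, hq.2⟩
      have hcard2 : 2 * P.card = n * n - n := by
        have := Finset.card_union_of_disjoint hdisj
        rw [← hsplit, Finset.offDiag_card, hScard, ← hcardPP'] at this
        omega
      have hPlt : P.card ≤ p - 1 := by omega
      set Bad : Finset (Fin d → ZMod p) :=
        Finset.univ.filter (fun a => a = 0 ∨ ∃ x ∈ S, ∃ y ∈ S, x ≠ y ∧
          (∑ i, a i * x i) = ∑ i, a i * y i) with hBad
      have hpairP : ∀ x ∈ S, ∀ y ∈ S, x ≠ y → (x, y) ∈ P ∨ (y, x) ∈ P := by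
        intro x hx y hy hxy
        rcases lt_or_gt_of_ne (hιne hxy) with h | h
        · refine Or.inl ?_
          rw [hP, Finset.mem_filter, Finset.mem_offDiag]
          exact ⟨⟨hx, hy, hxy⟩, h⟩
        · refine Or.inr ?_
          rw [hP, Finset.mem_filter, Finset.mem_offDiag]
          exact ⟨⟨hy, hx, fun h' => hxy h'.symm⟩, h⟩
      have hBadsub : Bad ⊆ P.biUnion
          (fun q => Finset.univ.filter (fun a => ∑ i, a i * (q.1 i - q.2 i) = 0)) := by
        intro a ha
        rw [hBad, Finset.mem_filter] at ha
        rw [Finset.mem_biUnion]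
        have key : ∀ x y : Fin d → ZMod p, (∑ i, a i * x i) = (∑ i, a i * y i) →
            ∑ i, a i * (x i - y i) = 0 := by
          intro x y hxy
          simp only [mul_sub, Finset.sum_sub_distrib, hxy, sub_self]
        rcases ha.2 with rfl | ⟨x, hx, y, hy, hxy, hsum⟩
        · rcases hpairP x₀ hx₀ y₀ hy₀ hxy₀ with h | h
          · exact ⟨_, h, by simp⟩
          · exact ⟨_, h, by simp⟩
        · rcases hpairP x hx y hy hxy with h | h
          · refine ⟨_, h, ?_⟩
            simp only [Finset.mem_filter, Finset.mem_univ, true_and]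
            exact key x y hsum
          · refine ⟨_, h, ?_⟩
            simp only [Finset.mem_filter, Finset.mem_univ, true_and]
            exact key y x hsum.symm
      have hBadcard : Bad.card < p ^ d := by
        have h3 : Bad.card ≤ P.card * p ^ (d - 1) := by
          calc Bad.card ≤ _ := Finset.card_le_card hBadsub
            _ ≤ ∑ q ∈ P, (Finset.univ.filter
                (fun a : Fin d → ZMod p => ∑ i, a i * (q.1 i - q.2 i) = 0)).card :=
              Finset.card_biUnion_le
            _ = ∑ q ∈ P, p ^ (d - 1) := by
              apply Finset.sum_congr rfl
              intro q hq
              rw [hP, Finset.mem_filter, Finset.mem_offDiag] at hq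
              exact card_hyperplane _ (sub_ne_zero.2 hq.1.2.2)
            _ = P.card * p ^ (d - 1) := by rw [Finset.sum_const, smul_eq_mul]
        have h4 : P.card * p ^ (d - 1) ≤ (p - 1) * p ^ (d - 1) :=
          Nat.mul_le_mul_right _ hPlt
        have h5 : (p - 1) * p ^ (d - 1) < p ^ d := by
          have hpos : 0 < p ^ (d - 1) := Nat.pow_pos (by omega : 0 < p)
          have heq : p * p ^ (d - 1) = p ^ d := by
            rw [← pow_succ']
            congr 1
            omega
          calc (p - 1) * p ^ (d - 1) < p * p ^ (d - 1) :=
                (Nat.mul_lt_mul_right hpos).2 (by omega)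
            _ = p ^ d := heq
        omega
      have : ∃ a : Fin d → ZMod p, a ∉ Bad := by
        by_contra hcon
        push_neg at hcon
        have : Finset.univ.card ≤ Bad.card :=
          Finset.card_le_card (fun a _ => hcon a)
        rw [Finset.card_univ, Fintype.card_fun, ZMod.card, Fintype.card_fin] at this
        omega
      obtain ⟨a, ha⟩ := this
      rw [hBad, Finset.mem_filter] at ha
      push_neg at ha
      have ha2 := ha (Finset.mem_univ a)
      obtain ⟨j, hj⟩ : ∃ j, a j ≠ 0 := by
        by_contra hcon; push_neg at hcon; exact ha2.1 (funext hcon)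
      refine ⟨a, j, hj, ?_⟩
      intro x hx y hy hxy
      by_contra hne
      exact (ha2.2 x hx y hy hne) hxy
  -- Step B
  set θ : (Fin d → ZMod p) → ZMod p := fun x => ∑ i, a i * x i with hθ
  set g : (Fin d → ZMod p) → ZMod p → ℂ :=
    fun b t => ∑ x : Fin d → ZMod p,
      if θ x = t then eC p (∑ i, b i * x i) * f x else 0 with hg
  have hcol : ∀ b x₁, f x₁ ≠ 0 → g b (θ x₁) = eC p (∑ i, b i * x₁ i) * f x₁ := by
    intro b x₁ h0
    simp only [hg]
    rw [Finset.sum_eq_single x₁]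
    · simp
    · intro x _ hne
      by_cases hfx : f x = 0
      · simp [hfx]
      · have hmem : x ∈ S := by
          simp only [hS, Finset.mem_filter, Finset.mem_univ, true_and]; exact hfx
        have hmem₁ : x₁ ∈ S := by
          simp only [hS, Finset.mem_filter, Finset.mem_univ, true_and]; exact h0
        have hne2 : θ x ≠ θ x₁ := fun hc => hne (hainj x hmem x₁ hmem₁ hc)
        simp [hne2]
    · intro hx; exact absurd (Finset.mem_univ x₁) hx
  have hzero : ∀ b t, (∀ x, f x ≠ 0 → θ x ≠ t) → g b t = 0 := by
    intro b t hno
    simp only [hg]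
    apply Finset.sum_eq_zero
    intro x _
    by_cases hfx : f x = 0
    · simp [hfx]
    · simp [hno x hfx]
  have hsuppg : ∀ b, Function.support (g b) = θ '' Function.support f := by
    intro b; ext t
    simp only [Function.mem_support, Set.mem_image]
    constructor
    · intro ht
      by_contra hno
      push_neg at hno
      exact ht (hzero b t fun x hx => hno x hx)
    · rintro ⟨x, hx, rfl⟩
      rw [hcol b x hx]
      exact mul_ne_zero (Complex.exp_ne_zero _) hx
  have hcardg : ∀ b, (Function.support (g b)).ncard = n := by
    intro b
    rw [hsuppg b, Set.ncard_image_of_injOn, hsupp]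
    intro x hx y hy hxy
    exact hainj x
      (by simp only [hS, Finset.mem_filter, Finset.mem_univ, true_and]; exact hx) y
      (by simp only [hS, Finset.mem_filter, Finset.mem_univ, true_and]; exact hy) hxy
  have hvalg : ∀ b t, g b t ∈ E ∪ {0} := by
    intro b t
    by_cases hex : ∃ x, f x ≠ 0 ∧ θ x = t
    · obtain ⟨x, hx, hxt⟩ := hex
      rw [← hxt, hcol b x hx]
      left
      have hfE : f x ∈ E := by
        rcases hf x with h | h
        · exact h
        · exact absurd (by simpa using h) hx
      rw [← hE (-(2 * Real.pi * (((∑ i, b i * x i : ZMod p)).val : ℝ) / p))]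
      refine ⟨f x, hfE, ?_⟩
      simp only
      rw [← eC_eq]
    · push_neg at hex
      right
      simp [hzero b t hex]
  have hconst : (p : ℂ)⁻¹ = (p : ℂ) ^ (d - 1) * ((p : ℂ) ^ d)⁻¹ := by
    have hpd : (p : ℂ) ^ d = (p : ℂ) ^ (d - 1) * p := by
      rw [← pow_succ]; congr 1; omega
    rw [hpd]
    rw [mul_inv]
    rw [← mul_assoc, mul_inv_cancel₀ (pow_ne_zero _ hpC), one_mul]
  have hft : ∀ b ξ, ft1 (g b) ξ = (p : ℂ) ^ (d - 1) * ftd f (fun i => b i + ξ * a i) := by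
    intro b ξ
    rw [ft1, ftd]
    have hstep : ∀ t : ZMod p,
        g b t * Complex.exp (-(2 * Real.pi * Complex.I) * ((ξ * t).val : ℂ) / p)
        = ∑ x : Fin d → ZMod p,
            (if θ x = t then eC p (∑ i, b i * x i) * f x * eC p (ξ * t) else 0) := by
      intro t
      simp only [hg]
      rw [Finset.sum_mul]
      apply Finset.sum_congr rfl
      intro x _
      rw [ite_mul, zero_mul]
      rfl
    calc (p : ℂ)⁻¹ * ∑ t : ZMod p,
          g b t * Complex.exp (-(2 * Real.pi * Complex.I) * ((ξ * t).val : ℂ) / p)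
        = (p : ℂ)⁻¹ * ∑ t : ZMod p, ∑ x : Fin d → ZMod p,
            (if θ x = t then eC p (∑ i, b i * x i) * f x * eC p (ξ * t) else 0) := by
          rw [Finset.sum_congr rfl fun t _ => hstep t]
      _ = (p : ℂ)⁻¹ * ∑ x : Fin d → ZMod p, ∑ t : ZMod p,
            (if θ x = t then eC p (∑ i, b i * x i) * f x * eC p (ξ * t) else 0) := by
          rw [Finset.sum_comm]
      _ = (p : ℂ)⁻¹ * ∑ x : Fin d → ZMod p,
            eC p (∑ i, b i * x i) * f x * eC p (ξ * θ x) := by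
          congr 1
          apply Finset.sum_congr rfl
          intro x _
          rw [Finset.sum_ite_eq, if_pos (Finset.mem_univ _)]
      _ = (p : ℂ)⁻¹ * ∑ x : Fin d → ZMod p,
            f x * eC p (∑ i, (b i + ξ * a i) * x i) := by
          congr 1
          apply Finset.sum_congr rfl
          intro x _
          have harg : (∑ i, (b i + ξ * a i) * x i) = (∑ i, b i * x i) + ξ * θ x := by
            simp only [hθ]
            rw [Finset.mul_sum, ← Finset.sum_add_distrib]
            apply Finset.sum_congr rfl
            intro i _
            ring
          rw [harg, eC_add]
          ring
      _ = (p : ℂ) ^ (d - 1) * (((p : ℂ) ^ d)⁻¹ * ∑ x : Fin d → ZMod p,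
            f x * Complex.exp (-(2 * Real.pi * Complex.I) *
              (((∑ i, (fun i => b i + ξ * a i) i * x i : ZMod p)).val : ℂ) / p)) := by
          rw [← mul_assoc, ← hconst]
          rfl
  have habs : ∀ b ξ, ‖ft1 (g b) ξ‖
      = (p : ℝ) ^ (d - 1) * ‖ftd f (fun i => b i + ξ * a i)‖ := by
    intro b ξ
    rw [hft, norm_mul, norm_pow, Complex.norm_natCast]
  have hw1 : ∀ b, wiener1 (g b)
      = (p : ℝ) ^ (d - 1) * ∑ ξ : ZMod p, ‖ftd f (fun i => b i + ξ * a i)‖ := by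
    intro b
    rw [wiener1, Finset.mul_sum]
    exact Finset.sum_congr rfl fun ξ _ => habs b ξ
  set W : Finset (Fin d → ZMod p) := Finset.univ.filter (fun b => b j = 0) with hW
  have hWcard : W.card = p ^ (d - 1) := by
    have hv : (Pi.single j (1 : ZMod p) : Fin d → ZMod p) ≠ 0 := by
      intro hc
      have := congrFun hc j
      simp at this
    rw [hW, ← card_hyperplane (Pi.single j (1 : ZMod p) : Fin d → ZMod p) hv]
    congr 1
    apply Finset.filter_congr
    intro b _
    have : ∑ i, b i * (Pi.single j (1 : ZMod p) : Fin d → ZMod p) i = b j := by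
      simp [Pi.single_apply, mul_ite, Finset.sum_ite_eq]
    rw [this]
  have hsum : ∑ b ∈ W, ∑ ξ : ZMod p, ‖ftd f (fun i => b i + ξ * a i)‖
      = wienerd f := by
    rw [wienerd, ← Finset.sum_product']
    apply Finset.sum_nbij'
      (i := fun q : (Fin d → ZMod p) × ZMod p => fun i => q.1 i + q.2 * a i)
      (j := fun c => (fun i => c i - (c j * (a j)⁻¹) * a i, c j * (a j)⁻¹))
    · intro q _; exact Finset.mem_univ _
    · intro c _
      rw [Finset.mem_product]
      refine ⟨?_, Finset.mem_univ _⟩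
      rw [hW, Finset.mem_filter]
      refine ⟨Finset.mem_univ _, ?_⟩
      simp only
      rw [mul_assoc, inv_mul_cancel₀ haj, mul_one, sub_self]
    · intro q hq
      rw [Finset.mem_product, hW, Finset.mem_filter] at hq
      have hq1 : q.1 j = 0 := hq.1.2
      have hcj : (q.1 j + q.2 * a j) * (a j)⁻¹ = q.2 := by
        rw [hq1, zero_add, mul_assoc, mul_inv_cancel₀ haj, mul_one]
      ext i
      · simp only [hcj]
        ring
      · simp only [hcj]
    · intro c _
      funext i
      simp only
      ring
    · intro q _
      rfl
  have hWbound : ∀ b ∈ W, F (p, (n : ℝ) / p) ≤ wiener1 (g b) :=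
    fun b _ => h1 (g b) (hvalg b) (hcardg b)
  have hppos : (0 : ℝ) < (p : ℝ) ^ (d - 1) := by positivity
  have hfinal : (p : ℝ) ^ (d - 1) * F (p, (n : ℝ) / p)
      ≤ (p : ℝ) ^ (d - 1) * wienerd f := by
    calc (p : ℝ) ^ (d - 1) * F (p, (n : ℝ) / p)
        = ∑ _b ∈ W, F (p, (n : ℝ) / p) := by
          rw [Finset.sum_const, hWcard, nsmul_eq_mul]
          push_cast
          ring
      _ ≤ ∑ b ∈ W, wiener1 (g b) := Finset.sum_le_sum hWbound
      _ = ∑ b ∈ W, (p : ℝ) ^ (d - 1)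
            * ∑ ξ : ZMod p, ‖ftd f (fun i => b i + ξ * a i)‖ :=
          Finset.sum_congr rfl fun b _ => hw1 b
      _ = (p : ℝ) ^ (d - 1) * ∑ b ∈ W,
            ∑ ξ : ZMod p, ‖ftd f (fun i => b i + ξ * a i)‖ := by
          rw [Finset.mul_sum]
      _ = (p : ℝ) ^ (d - 1) * wienerd f := by rw [hsum]
  exact le_of_mul_le_mul_left hfinal hppos
end

section
/- Let G be a finite abelian group, K > 0, L > 0, and k a positive integer. Let f : G → ℂ satisfy ‖f̂‖₁ ≤ K, let Q ⊆ supp f be a set such that |f(x)| ≥ L for all x ∈ Q, and define g(x) = 1_Q(x) f(x). Then T_k(g) ≥ |Q|^{2k} L^{4k} / (‖f‖₂² K^{2k−2}). -/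
open scoped BigOperators

/-- Fourier transform of `f : G → ℂ` over a finite abelian group `G`,
with respect to the character `γ`. -/
noncomputable def ftG {G : Type*} [AddCommGroup G] [Fintype G]
    (f : G → ℂ) (γ : AddChar G ℂ) : ℂ :=
  (Fintype.card G : ℂ)⁻¹ * ∑ x : G, f x * (starRingEnd ℂ) (γ x)

/-- Wiener norm of `f : G → ℂ`, i.e. the `ℓ¹`-norm of its Fourier transform. -/
noncomputable def wienerG {G : Type*} [AddCommGroup G] [Fintype G] (f : G → ℂ) : ℝ :=
  ∑ γ : AddChar G ℂ, ‖ftG f γ‖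

/-- `T_k(g) = Σ_{x₁+⋯+x_k = x₁'+⋯+x_k'} g(x₁)⋯g(x_k)·conj(g(x₁'))⋯conj(g(x_k'))`. -/
noncomputable def Tk {G : Type*} [AddCommGroup G] [Fintype G] [DecidableEq G] (k : ℕ) (g : G → ℂ) : ℂ :=
  ∑ x : Fin k → G, ∑ y : Fin k → G,
    if (∑ i, x i) = (∑ i, y i) then
      (∏ i, g (x i)) * ∏ i, (starRingEnd ℂ) (g (y i))
    else 0

section Aux

open Finset
open scoped NNReal

/-- Hölder-type inequality with integer exponents. -/
lemma holder3 {ι : Type*} [Fintype ι] (a b : ι → ℝ≥0) {k : ℕ} (hk : 1 ≤ k) :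
    (∑ i, a i * b i) ^ (2*k) ≤ (∑ i, b i ^ (2*k)) * (∑ i, a i) ^ (2*k-2) * ∑ i, a i ^ 2 := by
  have hp1 : (1:ℝ) < ((2*k : ℕ) : ℝ) := by
    have : 2 ≤ 2*k := by omega
    exact_mod_cast Nat.lt_of_lt_of_le Nat.one_lt_two this
  set p : ℝ := ((2*k : ℕ) : ℝ) with hp
  set q : ℝ := p/(p-1) with hq
  have hpq : p.HolderConjugate q := (Real.holderConjugate_iff_eq_conjExponent hp1).2 rfl
  have hp0 : p ≠ 0 := hpq.ne_zero
  have hps : p - 1 ≠ 0 := hpq.sub_one_ne_zero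
  have hq0 : q ≠ 0 := hpq.symm.ne_zero
  have step1 : ∑ i, a i * b i ≤ (∑ i, b i ^ p) ^ (1/p) * (∑ i, a i ^ q) ^ (1/q) := by
    simpa [mul_comm] using NNReal.inner_le_Lp_mul_Lq Finset.univ b a hpq
  have step2 : ∑ i, a i ^ q ≤ ((∑ i, a i) ^ (2 - q)) * ((∑ i, a i ^ (2:ℝ)) ^ (q-1)) := by
    rcases eq_or_lt_of_le hk with h1 | h2
    · have hq2 : q = 2 := by rw [hq, hp, ← h1]; norm_num
      simp only [hq2]
      norm_num
    · have hk2 : (2:ℝ) < p := by rw [hp]; exact_mod_cast (by omega : 2 < 2*k)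
      have hq1 : 1 < q := hpq.symm.lt
      have h2q : 0 < 2 - q := by
        rw [hq, sub_pos, div_lt_iff₀ (by linarith)]; nlinarith
      have hconj : ((2-q)⁻¹).HolderConjugate ((q-1)⁻¹) :=
        Real.HolderConjugate.inv_inv h2q (by linarith) (by ring)
      have key := NNReal.inner_le_Lp_mul_Lq Finset.univ
        (fun i => a i ^ ((2:ℝ) - q)) (fun i => a i ^ (2*q - 2)) hconj
      have e1 : ∀ x : ℝ≥0, x ^ ((2:ℝ)-q) * x ^ (2*q-2) = x ^ q := by
        intro x
        have hne : (2 - q) + (2*q - 2) ≠ 0 := by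
          rw [show (2-q) + (2*q-2) = q by ring]; exact hq0
        rw [← NNReal.rpow_add' hne]
        congr 1; ring
      have e2 : ∀ x : ℝ≥0, (x ^ ((2:ℝ)-q)) ^ ((2-q)⁻¹) = x := by
        intro x
        rw [← NNReal.rpow_mul, mul_inv_cancel₀ (ne_of_gt h2q), NNReal.rpow_one]
      have e3 : ∀ x : ℝ≥0, (x ^ (2*q-2)) ^ ((q-1)⁻¹) = x ^ (2:ℝ) := by
        intro x
        rw [← NNReal.rpow_mul, show 2*q - 2 = 2*(q-1) by ring, mul_assoc,
          mul_inv_cancel₀ (sub_ne_zero.mpr hq1.ne'), mul_one]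
      simp only [e1, e2, e3, one_div, inv_inv] at key
      exact key
  have step3 : ∑ i, a i * b i
      ≤ (∑ i, b i ^ p) ^ (1/p) *
        ((∑ i, a i) ^ (((2:ℝ) - q) * (1/q)) * (∑ i, a i ^ (2:ℝ)) ^ ((q-1) * (1/q))) := by
    refine step1.trans ?_
    rw [NNReal.rpow_mul, NNReal.rpow_mul, ← NNReal.mul_rpow]
    exact mul_le_mul_right (NNReal.rpow_le_rpow step2 hpq.symm.one_div_nonneg) _
  have step4 := pow_le_pow_left₀ zero_le step3 (2*k)
  have pow_rpow : ∀ (x : ℝ≥0) (e : ℝ), (x ^ e) ^ (2*k) = x ^ (e * p) := by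
    intro x e
    rw [← NNReal.rpow_natCast (x ^ e) (2*k), ← NNReal.rpow_mul]
  have A1 : (1/p) * p = 1 := by field_simp
  have A2 : (((2:ℝ)-q) * (1/q)) * p = p - 2 := by rw [hq]; field_simp; ring
  have A3 : ((q-1) * (1/q)) * p = 1 := by rw [hq]; field_simp; ring
  have hbp : ∑ i, b i ^ p = ∑ i, b i ^ (2*k) := by
    refine Finset.sum_congr rfl fun i _ => ?_
    rw [hp, NNReal.rpow_natCast]
  have ha2 : ∑ i, a i ^ (2:ℝ) = ∑ i, a i ^ 2 := by
    refine Finset.sum_congr rfl fun i _ => ?_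
    rw [show (2:ℝ) = ((2:ℕ):ℝ) by norm_num, NNReal.rpow_natCast]
  have hp2 : p - 2 = ((2*k-2 : ℕ) : ℝ) := by
    rw [hp]; push_cast [Nat.cast_sub (by omega : 2 ≤ 2*k)]; norm_num
  calc (∑ i, a i * b i) ^ (2*k)
      ≤ ((∑ i, b i ^ p) ^ (1/p) *
          ((∑ i, a i) ^ (((2:ℝ) - q) * (1/q)) * (∑ i, a i ^ (2:ℝ)) ^ ((q-1) * (1/q)))) ^ (2*k) :=
        step4
    _ = (∑ i, b i ^ (2*k)) * (∑ i, a i) ^ (2*k-2) * ∑ i, a i ^ 2 := by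
        rw [mul_pow, mul_pow, pow_rpow, pow_rpow, pow_rpow, A1, A2, A3, NNReal.rpow_one,
          NNReal.rpow_one, hbp, ha2, hp2, NNReal.rpow_natCast, mul_assoc]

/-- Real-valued version of `holder3`. -/
lemma holder3R {ι : Type*} [Fintype ι] (a b : ι → ℝ) (ha : ∀ i, 0 ≤ a i) (hb : ∀ i, 0 ≤ b i)
    {k : ℕ} (hk : 1 ≤ k) :
    (∑ i, a i * b i) ^ (2*k) ≤ (∑ i, b i ^ (2*k)) * (∑ i, a i) ^ (2*k-2) * ∑ i, a i ^ 2 := by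
  have h := holder3 (fun i => (a i).toNNReal) (fun i => (b i).toNNReal) hk
  have h2 := NNReal.coe_le_coe.2 h
  push_cast at h2
  simpa only [Real.coe_toNNReal _ (ha _), Real.coe_toNNReal _ (hb _)] using h2

variable {G : Type} [AddCommGroup G] [Fintype G] [DecidableEq G]

lemma keyOrth (x y : G) :
    ∑ γ : AddChar G ℂ, (starRingEnd ℂ) (γ x) * γ y = if y = x then (Fintype.card G : ℂ) else 0 := by
  have h : ∀ γ : AddChar G ℂ, (starRingEnd ℂ) (γ x) * γ y = γ (y - x) := by
    intro γ
    rw [← AddChar.map_neg_eq_conj, ← AddChar.map_add_eq_mul]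
    congr 1; abel
  simp_rw [h, AddChar.sum_apply_eq_ite, sub_eq_zero]

omit [DecidableEq G] in
lemma conj_ftG (v : G → ℂ) (γ : AddChar G ℂ) :
    (starRingEnd ℂ) (ftG v γ) = (Fintype.card G : ℂ)⁻¹ * ∑ y : G, (starRingEnd ℂ) (v y) * γ y := by
  simp only [ftG, map_mul, map_sum, map_inv₀, map_natCast, Complex.conj_conj]

lemma parsevalG (u v : G → ℂ) :
    ∑ γ : AddChar G ℂ, ftG u γ * (starRingEnd ℂ) (ftG v γ)
      = (Fintype.card G : ℂ)⁻¹ * ∑ x : G, u x * (starRingEnd ℂ) (v x) := by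
  have hc : (Fintype.card G : ℂ) ≠ 0 := Nat.cast_ne_zero.2 Fintype.card_ne_zero
  have expand : ∀ γ : AddChar G ℂ, ftG u γ * (starRingEnd ℂ) (ftG v γ)
      = (Fintype.card G : ℂ)⁻¹ * (Fintype.card G : ℂ)⁻¹ *
        ∑ x : G, ∑ y : G, (u x * (starRingEnd ℂ) (v y)) * ((starRingEnd ℂ) (γ x) * γ y) := by
    intro γ
    rw [conj_ftG, ftG, mul_mul_mul_comm, Finset.sum_mul_sum]
    congr 1
    refine Finset.sum_congr rfl fun x _ => Finset.sum_congr rfl fun y _ => by ring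
  calc ∑ γ : AddChar G ℂ, ftG u γ * (starRingEnd ℂ) (ftG v γ)
      = (Fintype.card G : ℂ)⁻¹ * (Fintype.card G : ℂ)⁻¹ *
          ∑ γ : AddChar G ℂ, ∑ x : G, ∑ y : G,
            (u x * (starRingEnd ℂ) (v y)) * ((starRingEnd ℂ) (γ x) * γ y) := by
        simp_rw [expand]; rw [← Finset.mul_sum]
    _ = (Fintype.card G : ℂ)⁻¹ * (Fintype.card G : ℂ)⁻¹ *
          ∑ x : G, ∑ y : G, (u x * (starRingEnd ℂ) (v y)) *
            ∑ γ : AddChar G ℂ, (starRingEnd ℂ) (γ x) * γ y := by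
        congr 1
        rw [Finset.sum_comm]
        refine Finset.sum_congr rfl fun x _ => ?_
        rw [Finset.sum_comm]
        exact Finset.sum_congr rfl fun y _ => (Finset.mul_sum _ _ _).symm
    _ = (Fintype.card G : ℂ)⁻¹ * (Fintype.card G : ℂ)⁻¹ *
          ∑ x : G, (u x * (starRingEnd ℂ) (v x)) * (Fintype.card G : ℂ) := by
        simp_rw [keyOrth, mul_ite, mul_zero, Finset.sum_ite_eq', Finset.mem_univ, if_pos]
    _ = (Fintype.card G : ℂ)⁻¹ * ∑ x : G, u x * (starRingEnd ℂ) (v x) := by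
        rw [← Finset.sum_mul]
        field_simp

omit [DecidableEq G] in
lemma pow_expand (h : G → ℂ) (k : ℕ) :
    (∑ x : G, h x) ^ k = ∑ x : Fin k → G, ∏ i, h (x i) := by
  rw [← Fintype.piFinset_univ, ← Finset.prod_univ_sum]
  simp

omit [Fintype G] [DecidableEq G] in
lemma addChar_prod {k : ℕ} (γ : AddChar G ℂ) (x : Fin k → G) :
    ∏ i, γ (x i) = γ (∑ i, x i) := by
  induction (Finset.univ : Finset (Fin k)) using Finset.cons_induction with
  | empty => simp
  | cons a s ha ih => rw [Finset.sum_cons, Finset.prod_cons, AddChar.map_add_eq_mul, ih]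

lemma tk_eq (k : ℕ) (g : G → ℂ) :
    (Fintype.card G : ℂ) * Tk k g
      = ∑ γ : AddChar G ℂ,
          (∑ x : G, g x * (starRingEnd ℂ) (γ x)) ^ k *
          (∑ x : G, (starRingEnd ℂ) (g x) * γ x) ^ k := by
  symm
  have pow1 : ∀ γ : AddChar G ℂ, (∑ x : G, g x * (starRingEnd ℂ) (γ x)) ^ k
      = ∑ x : Fin k → G, (∏ i, g (x i)) * (starRingEnd ℂ) (γ (∑ i, x i)) := by
    intro γ
    rw [pow_expand (fun x => g x * (starRingEnd ℂ) (γ x)) k]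
    refine Finset.sum_congr rfl fun x _ => ?_
    rw [Finset.prod_mul_distrib, ← map_prod, addChar_prod]
  have pow2 : ∀ γ : AddChar G ℂ, (∑ x : G, (starRingEnd ℂ) (g x) * γ x) ^ k
      = ∑ y : Fin k → G, (∏ i, (starRingEnd ℂ) (g (y i))) * γ (∑ i, y i) := by
    intro γ
    rw [pow_expand (fun x => (starRingEnd ℂ) (g x) * γ x) k]
    refine Finset.sum_congr rfl fun y _ => ?_
    rw [Finset.prod_mul_distrib, addChar_prod]
  calc ∑ γ : AddChar G ℂ,
          (∑ x : G, g x * (starRingEnd ℂ) (γ x)) ^ k *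
          (∑ x : G, (starRingEnd ℂ) (g x) * γ x) ^ k
      = ∑ γ : AddChar G ℂ, ∑ x : Fin k → G, ∑ y : Fin k → G,
          ((∏ i, g (x i)) * ∏ i, (starRingEnd ℂ) (g (y i))) *
            ((starRingEnd ℂ) (γ (∑ i, x i)) * γ (∑ i, y i)) := by
        refine Finset.sum_congr rfl fun γ _ => ?_
        rw [pow1, pow2, Finset.sum_mul_sum]
        exact Finset.sum_congr rfl fun x _ => Finset.sum_congr rfl fun y _ => by ring
    _ = ∑ x : Fin k → G, ∑ y : Fin k → G,
          ((∏ i, g (x i)) * ∏ i, (starRingEnd ℂ) (g (y i))) *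
            ∑ γ : AddChar G ℂ, (starRingEnd ℂ) (γ (∑ i, x i)) * γ (∑ i, y i) := by
        rw [Finset.sum_comm]
        refine Finset.sum_congr rfl fun x _ => ?_
        rw [Finset.sum_comm]
        exact Finset.sum_congr rfl fun y _ => (Finset.mul_sum _ _ _).symm
    _ = ∑ x : Fin k → G, ∑ y : Fin k → G,
          ((∏ i, g (x i)) * ∏ i, (starRingEnd ℂ) (g (y i))) *
            (if (∑ i, y i) = (∑ i, x i) then (Fintype.card G : ℂ) else 0) := by
        simp_rw [keyOrth]
    _ = (Fintype.card G : ℂ) * Tk k g := by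
        rw [Tk, Finset.mul_sum]
        refine Finset.sum_congr rfl fun x _ => ?_
        rw [Finset.mul_sum]
        refine Finset.sum_congr rfl fun y _ => ?_
        rcases eq_or_ne (∑ i, x i) (∑ i, y i) with h | h
        · rw [if_pos h, if_pos h.symm]; ring
        · rw [if_neg h, if_neg (Ne.symm h), mul_zero, mul_zero]

lemma tk_re (k : ℕ) (g : G → ℂ) :
    (Fintype.card G : ℝ) * (Tk k g).re
      = (Fintype.card G : ℝ) ^ (2*k) * ∑ γ : AddChar G ℂ, ‖ftG g γ‖ ^ (2*k) := by
  have hc : (Fintype.card G : ℂ) ≠ 0 := Nat.cast_ne_zero.2 Fintype.card_ne_zero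
  have hterm : ∀ γ : AddChar G ℂ,
      (∑ x : G, g x * (starRingEnd ℂ) (γ x)) ^ k * (∑ x : G, (starRingEnd ℂ) (g x) * γ x) ^ k
        = ((((Fintype.card G : ℝ) * ‖ftG g γ‖) ^ (2*k) : ℝ) : ℂ) := by
    intro γ
    have hS : (∑ x : G, (starRingEnd ℂ) (g x) * γ x)
        = (starRingEnd ℂ) (∑ x : G, g x * (starRingEnd ℂ) (γ x)) := by
      rw [map_sum]
      exact Finset.sum_congr rfl fun x _ => by rw [map_mul, Complex.conj_conj]
    have hSft : (∑ x : G, g x * (starRingEnd ℂ) (γ x)) = (Fintype.card G : ℂ) * ftG g γ := by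
      rw [ftG, ← mul_assoc, mul_inv_cancel₀ hc, one_mul]
    rw [hS, ← map_pow, Complex.mul_conj, Complex.normSq_eq_norm_sq]
    congr 1
    rw [norm_pow, ← pow_mul, hSft, norm_mul, Complex.norm_natCast, mul_comm k 2]
  have h := tk_eq k g
  rw [Finset.sum_congr rfl (fun γ _ => hterm γ), ← Complex.ofReal_sum] at h
  have hre := congrArg Complex.re h
  have hcast : ((Fintype.card G : ℂ)).re = (Fintype.card G : ℝ) := by simp
  rw [Complex.mul_re] at hre
  simp only [Complex.natCast_re, Complex.natCast_im, Complex.ofReal_re, zero_mul, sub_zero] at hre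
  rw [hre]
  rw [Finset.mul_sum]
  exact Finset.sum_congr rfl fun γ _ => by rw [mul_pow]

end Aux

theorem stmt5 (G : Type) [AddCommGroup G] [Fintype G] [DecidableEq G]
    (K L : ℝ) (hK : 0 < K) (hL : 0 < L) (k : ℕ) (hk : 1 ≤ k)
    (f : G → ℂ) (hfK : wienerG f ≤ K)
    (Q : Finset G) (hQsupp : ↑Q ⊆ Function.support f)
    (hQL : ∀ x ∈ Q, L ≤ ‖f x‖)
    (g : G → ℂ) (hg : ∀ x, g x = if x ∈ Q then f x else 0) :
    (Q.card : ℝ) ^ (2 * k) * L ^ (4 * k) /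
        ((∑ x : G, ‖f x‖ ^ 2) * K ^ (2 * k - 2))
      ≤ (Tk k g).re := by
  classical
  set n : ℝ := (Fintype.card G : ℝ) with hn
  have hn0 : 0 < n := by
    rw [hn]; exact_mod_cast Fintype.card_pos
  have hcC : (Fintype.card G : ℂ) ≠ 0 := Nat.cast_ne_zero.2 Fintype.card_ne_zero
  set A : AddChar G ℂ → ℝ := fun γ => ‖ftG f γ‖ with hA
  set B : AddChar G ℂ → ℝ := fun γ => ‖ftG g γ‖ with hB
  have hAn : ∀ γ, 0 ≤ A γ := fun γ => norm_nonneg _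
  have hBn : ∀ γ, 0 ≤ B γ := fun γ => norm_nonneg _
  -- Tk real identity
  have F1 : n * (Tk k g).re = n ^ (2*k) * ∑ γ : AddChar G ℂ, B γ ^ (2*k) := tk_re k g
  have hTknn : 0 ≤ (Tk k g).re := by
    have h0 : 0 ≤ n ^ (2*k) * ∑ γ : AddChar G ℂ, B γ ^ (2*k) := by positivity
    nlinarith
  -- Parseval for f
  have F2 : (∑ x : G, ‖f x‖ ^ 2) = n * ∑ γ : AddChar G ℂ, A γ ^ 2 := by
    have h := parsevalG (G := G) f f
    have h2 : ∑ x : G, f x * (starRingEnd ℂ) (f x)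
        = (Fintype.card G : ℂ) * ∑ γ : AddChar G ℂ, ftG f γ * (starRingEnd ℂ) (ftG f γ) := by
      rw [h, ← mul_assoc, mul_inv_cancel₀ hcC, one_mul]
    have e1 : ∑ x : G, f x * (starRingEnd ℂ) (f x)
        = ((∑ x : G, ‖f x‖ ^ 2 : ℝ) : ℂ) := by
      rw [Complex.ofReal_sum]
      exact Finset.sum_congr rfl fun x _ => by
        rw [Complex.mul_conj, Complex.normSq_eq_norm_sq, Complex.ofReal_pow]
    have e2 : ∑ γ : AddChar G ℂ, ftG f γ * (starRingEnd ℂ) (ftG f γ)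
        = ((∑ γ : AddChar G ℂ, A γ ^ 2 : ℝ) : ℂ) := by
      rw [Complex.ofReal_sum]
      exact Finset.sum_congr rfl fun γ _ => by
        rw [Complex.mul_conj, Complex.normSq_eq_norm_sq, Complex.ofReal_pow]
    rw [e1, e2] at h2
    exact_mod_cast h2
  -- lower bound for the inner sum
  have F3 : (Q.card : ℝ) * L ^ 2 ≤ n * ∑ γ : AddChar G ℂ, A γ * B γ := by
    have hgf : ∑ x : G, g x * (starRingEnd ℂ) (f x)
        = ((∑ x ∈ Q, ‖f x‖ ^ 2 : ℝ) : ℂ) := by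
      rw [Complex.ofReal_sum]
      calc ∑ x : G, g x * (starRingEnd ℂ) (f x)
          = ∑ x : G, (if x ∈ Q then f x * (starRingEnd ℂ) (f x) else 0) := by
            refine Finset.sum_congr rfl fun x _ => ?_
            rw [hg x, ite_mul, zero_mul]
        _ = ∑ x ∈ Q, f x * (starRingEnd ℂ) (f x) := by
            rw [Finset.sum_ite_mem, Finset.univ_inter]
        _ = ∑ x ∈ Q, ((‖f x‖ ^ 2 : ℝ) : ℂ) := by
            exact Finset.sum_congr rfl fun x _ => by
              rw [Complex.mul_conj, Complex.normSq_eq_norm_sq, Complex.ofReal_pow]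
    have hQsum : (Q.card : ℝ) * L ^ 2 ≤ ∑ x ∈ Q, ‖f x‖ ^ 2 := by
      calc (Q.card : ℝ) * L ^ 2 = ∑ _x ∈ Q, L ^ 2 := by rw [Finset.sum_const, nsmul_eq_mul]
        _ ≤ ∑ x ∈ Q, ‖f x‖ ^ 2 :=
            Finset.sum_le_sum fun x hx => pow_le_pow_left₀ hL.le (hQL x hx) 2
    have hpars : ∑ x : G, g x * (starRingEnd ℂ) (f x)
        = (Fintype.card G : ℂ) * ∑ γ : AddChar G ℂ, ftG g γ * (starRingEnd ℂ) (ftG f γ) := by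
      rw [parsevalG, ← mul_assoc, mul_inv_cancel₀ hcC, one_mul]
    have hre : (∑ x ∈ Q, ‖f x‖ ^ 2 : ℝ)
        = ((Fintype.card G : ℂ) * ∑ γ : AddChar G ℂ, ftG g γ * (starRingEnd ℂ) (ftG f γ)).re := by
      rw [← hpars, hgf, Complex.ofReal_re]
    have habs : ((Fintype.card G : ℂ) * ∑ γ : AddChar G ℂ, ftG g γ * (starRingEnd ℂ) (ftG f γ)).re
        ≤ n * ∑ γ : AddChar G ℂ, A γ * B γ := by
      refine (Complex.re_le_norm _).trans ?_
      rw [norm_mul, Complex.norm_natCast]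
      refine mul_le_mul_of_nonneg_left ?_ hn0.le
      refine (norm_sum_le _ _).trans ?_
      refine le_of_eq (Finset.sum_congr rfl fun γ _ => ?_)
      rw [norm_mul, Complex.norm_conj]
      exact mul_comm _ _
    calc (Q.card : ℝ) * L ^ 2 ≤ ∑ x ∈ Q, ‖f x‖ ^ 2 := hQsum
      _ = _ := hre
      _ ≤ n * ∑ γ : AddChar G ℂ, A γ * B γ := habs
  -- main case split
  rcases Finset.eq_empty_or_nonempty Q with hQe | hQne
  · rw [hQe]
    simp only [Finset.card_empty, Nat.cast_zero]
    rw [zero_pow (by omega : 2*k ≠ 0), zero_mul, zero_div]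
    exact hTknn
  · -- positivity of denominator
    obtain ⟨x0, hx0⟩ := hQne
    have hD : 0 < ∑ x : G, ‖f x‖ ^ 2 := by
      have h1 : L ^ 2 ≤ ‖f x0‖ ^ 2 := pow_le_pow_left₀ hL.le (hQL x0 hx0) 2
      have h2 : ‖f x0‖ ^ 2 ≤ ∑ x : G, ‖f x‖ ^ 2 :=
        Finset.single_le_sum (f := fun x => ‖f x‖ ^ 2)
          (fun x _ => by positivity) (Finset.mem_univ x0)
      nlinarith
    set D : ℝ := ∑ x : G, ‖f x‖ ^ 2 with hDdef
    have hden : 0 < D * K ^ (2*k-2) := mul_pos hD (pow_pos hK _)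
    rw [div_le_iff₀ hden]
    -- chain
    have hWA : wienerG f = ∑ γ : AddChar G ℂ, A γ := rfl
    have c1 : ((Q.card : ℝ) * L ^ 2) ^ (2*k) ≤ (n * ∑ γ : AddChar G ℂ, A γ * B γ) ^ (2*k) := by
      refine pow_le_pow_left₀ (by positivity) F3 _
    have c2 : (∑ γ : AddChar G ℂ, A γ * B γ) ^ (2*k)
        ≤ (∑ γ : AddChar G ℂ, B γ ^ (2*k)) * (∑ γ : AddChar G ℂ, A γ) ^ (2*k-2)
            * ∑ γ : AddChar G ℂ, A γ ^ 2 :=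
      holder3R A B hAn hBn hk
    have c3 : (∑ γ : AddChar G ℂ, B γ ^ (2*k)) * (∑ γ : AddChar G ℂ, A γ) ^ (2*k-2)
            * ∑ γ : AddChar G ℂ, A γ ^ 2
        ≤ (∑ γ : AddChar G ℂ, B γ ^ (2*k)) * K ^ (2*k-2) * ∑ γ : AddChar G ℂ, A γ ^ 2 := by
      have hAK : ∑ γ : AddChar G ℂ, A γ ≤ K := by rw [← hWA]; exact hfK
      have : (∑ γ : AddChar G ℂ, A γ) ^ (2*k-2) ≤ K ^ (2*k-2) :=
        pow_le_pow_left₀ (Finset.sum_nonneg fun γ _ => hAn γ) hAK _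
      have hB0 : 0 ≤ ∑ γ : AddChar G ℂ, B γ ^ (2*k) :=
        Finset.sum_nonneg fun γ _ => by positivity
      have hA0 : 0 ≤ ∑ γ : AddChar G ℂ, A γ ^ 2 :=
        Finset.sum_nonneg fun γ _ => by positivity
      exact mul_le_mul_of_nonneg_right (mul_le_mul_of_nonneg_left this hB0) hA0
    have hA2D : ∑ γ : AddChar G ℂ, A γ ^ 2 = n⁻¹ * D := by
      rw [F2, ← mul_assoc, inv_mul_cancel₀ hn0.ne', one_mul]
    -- combine
    have hLpow : ((Q.card : ℝ) * L ^ 2) ^ (2*k) = (Q.card : ℝ) ^ (2*k) * L ^ (4*k) := by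
      rw [mul_pow, ← pow_mul]
      congr 2
      omega
    have final : (Q.card : ℝ) ^ (2*k) * L ^ (4*k) ≤ (Tk k g).re * (D * K ^ (2*k-2)) := by
      calc (Q.card : ℝ) ^ (2*k) * L ^ (4*k)
          = ((Q.card : ℝ) * L ^ 2) ^ (2*k) := hLpow.symm
        _ ≤ (n * ∑ γ : AddChar G ℂ, A γ * B γ) ^ (2*k) := c1
        _ = n ^ (2*k) * (∑ γ : AddChar G ℂ, A γ * B γ) ^ (2*k) := by rw [mul_pow]
        _ ≤ n ^ (2*k) * ((∑ γ : AddChar G ℂ, B γ ^ (2*k)) * (∑ γ : AddChar G ℂ, A γ) ^ (2*k-2)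
              * ∑ γ : AddChar G ℂ, A γ ^ 2) :=
            mul_le_mul_of_nonneg_left c2 (by positivity)
        _ ≤ n ^ (2*k) * ((∑ γ : AddChar G ℂ, B γ ^ (2*k)) * K ^ (2*k-2)
              * ∑ γ : AddChar G ℂ, A γ ^ 2) :=
            mul_le_mul_of_nonneg_left c3 (by positivity)
        _ = (n * (Tk k g).re) * K ^ (2*k-2) * (n⁻¹ * D) := by
            rw [hA2D, F1]; ring
        _ = (Tk k g).re * (D * K ^ (2*k-2)) := by
            field_simp
    exact final
end

section
/- There is an absolute constant c > 0 such that for every prime p and every f : ℤ/pℤ → ℂ with |f(x)| ≥ 1 for all x in S := supp f (S nonempty), setting M := max_{x} |f(x)|, the additive energy of S satisfies T₂(S) ≥ c |S|³ / (M ‖f̂‖₁²). -/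
open scoped BigOperators

/-- The additive energy `T₂(S)`: the number of quadruples
`(x₁, x₂, x₁', x₂') ∈ S⁴` with `x₁ + x₂ = x₁' + x₂'`. -/
noncomputable def T2 {p : ℕ} (S : Set (ZMod p)) : ℕ :=
  Set.ncard {q : ZMod p × ZMod p × ZMod p × ZMod p |
    q.1 ∈ S ∧ q.2.1 ∈ S ∧ q.2.2.1 ∈ S ∧ q.2.2.2 ∈ S ∧ q.1 + q.2.1 = q.2.2.1 + q.2.2.2}

set_option linter.unusedSectionVars false

section Helpers
open Finset Complex

namespace S9
variable {p : ℕ} [hp : Fact p.Prime]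


noncomputable def eZ (p : ℕ) (m : ℤ) : ℂ :=
  Complex.exp (-(2 * Real.pi * Complex.I) * (m : ℂ) / p)

lemma pne0 : (p : ℂ) ≠ 0 := by
  exact_mod_cast (Nat.cast_ne_zero (R := ℂ)).2 hp.out.ne_zero

lemma eZ_add (m n : ℤ) : eZ p (m + n) = eZ p m * eZ p n := by
  rw [eZ, eZ, eZ, ← Complex.exp_add]
  congr 1
  push_cast
  ring

lemma eZ_zero : eZ p 0 = 1 := by simp [eZ]

lemma eZ_mul_p (k : ℤ) : eZ p (p * k) = 1 := by
  have h : -(2 * Real.pi * Complex.I) * ((p : ℂ) * k) / p = (-k : ℤ) * (2 * Real.pi * Complex.I) := by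
    have := pne0 (p := p)
    push_cast
    field_simp
  rw [eZ]
  push_cast
  rw [h, Complex.exp_int_mul_two_pi_mul_I]

lemma eZ_mod (m : ℤ) : eZ p (m % p) = eZ p m := by
  conv_rhs => rw [← Int.emod_add_mul_ediv m p]
  rw [eZ_add, eZ_mul_p, mul_one]

noncomputable def χ (a : ZMod p) : ℂ := eZ p (a.val : ℤ)

lemma χ_intCast (m : ℤ) : χ ((m : ZMod p)) = eZ p m := by
  rw [χ, ZMod.val_intCast, eZ_mod]

lemma χ_add (a b : ZMod p) : χ (a + b) = χ a * χ b := by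
  have ha : (a.val : ZMod p) = a := ZMod.natCast_rightInverse a
  have hb : (b.val : ZMod p) = b := ZMod.natCast_rightInverse b
  have h : a + b = (((a.val : ℤ) + (b.val : ℤ) : ℤ) : ZMod p) := by
    push_cast [ha, hb]; rfl
  rw [h, χ_intCast, eZ_add, ← χ_intCast, ← χ_intCast]
  push_cast [ha, hb]
  rfl

lemma χ_zero : χ (0 : ZMod p) = 1 := by
  have : χ ((0 : ℤ) : ZMod p) = eZ p 0 := χ_intCast 0
  simpa [eZ_zero] using this

lemma conj_χ (a : ZMod p) : (starRingEnd ℂ) (χ a) = χ (-a) := by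
  have h1 : χ (-a) = eZ p (-(a.val : ℤ)) := by
    have : ((-(a.val : ℤ) : ℤ) : ZMod p) = -a := by
      push_cast
      exact congrArg Neg.neg (ZMod.natCast_rightInverse a)
    rw [← this, χ_intCast]
  rw [h1, χ, eZ, eZ, ← Complex.exp_conj]
  congr 1
  rw [map_div₀, map_mul, map_neg, map_mul]
  simp only [map_mul, Complex.conj_I, Complex.conj_ofReal, map_natCast, map_intCast, map_ofNat]
  push_cast
  ring


lemma χ_pow (y : ZMod p) : χ y = (eZ p 1) ^ (y.val) := by
  rw [χ, eZ, eZ, ← Complex.exp_nat_mul]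
  congr 1
  push_cast
  ring

lemma zeta_ne_one : eZ p (1 : ℤ) ≠ 1 := by
  intro h
  rw [eZ, Complex.exp_eq_one_iff] at h
  obtain ⟨n, hn⟩ := h
  have hp2 : (2:ℝ) ≤ p := by exact_mod_cast hp.out.two_le
  have hpne : (p : ℂ) ≠ 0 := pne0
  have h2 : -(2 * Real.pi * Complex.I) = (n * p : ℂ) * (2 * Real.pi * Complex.I) := by
    field_simp at hn
    push_cast at hn ⊢
    linear_combination (2 * Real.pi * Complex.I) * hn
  have h3 : ((n * p + 1 : ℤ) : ℂ) * (2 * Real.pi * Complex.I) = 0 := by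
    push_cast
    linear_combination -h2
  rcases mul_eq_zero.1 h3 with h4 | h4
  · have h5 : (n * p + 1 : ℤ) = 0 := by exact_mod_cast h4
    have h6 : (p : ℤ) ∣ 1 := ⟨-n, by linarith⟩
    have h7 := Int.le_of_dvd one_pos h6
    have h8 : (2 : ℤ) ≤ p := by exact_mod_cast hp.out.two_le
    linarith
  · exact Complex.two_pi_I_ne_zero h4

lemma χ_sum_eq_zero : ∑ y : ZMod p, χ (y : ZMod p) = 0 := by
  have h1 : ∑ y : ZMod p, χ (y : ZMod p) = ∑ k ∈ Finset.range p, (eZ p 1) ^ k := by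
    refine Finset.sum_nbij' (fun y => y.val) (fun k => (k : ZMod p)) ?_ ?_ ?_ ?_ ?_
    · intro y _; exact Finset.mem_range.2 (ZMod.val_lt y)
    · intro k _; exact Finset.mem_univ _
    · intro y _; exact ZMod.natCast_rightInverse y
    · intro k hk; exact ZMod.val_cast_of_lt (Finset.mem_range.1 hk)
    · intro y _; exact χ_pow y
  rw [h1, geom_sum_eq zeta_ne_one]
  have hzp : (eZ p 1) ^ p = 1 := by
    rw [eZ, ← Complex.exp_nat_mul]
    have hpne : (p : ℂ) ≠ 0 := pne0
    have : (p : ℂ) * (-(2 * Real.pi * Complex.I) * (((1:ℤ)):ℂ) / p) = ((-1 : ℤ) : ℂ) * (2 * Real.pi * Complex.I) := by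
      field_simp
      ring
    rw [this, Complex.exp_int_mul_two_pi_mul_I]
  rw [hzp, sub_self, zero_div]

lemma orth (c : ZMod p) : ∑ ξ : ZMod p, χ (ξ * c) = if c = 0 then (p : ℂ) else 0 := by
  by_cases hc : c = 0
  · simp [hc, χ_zero, Finset.card_univ]
  · rw [if_neg hc]
    have hbij : Function.Bijective (fun ξ : ZMod p => ξ * c) := by
      have : Function.Injective (fun ξ : ZMod p => ξ * c) := fun a b hab => by
        exact mul_right_cancel₀ hc hab
      exact Finite.injective_iff_bijective.1 this
    calc ∑ ξ : ZMod p, χ (ξ * c) = ∑ y : ZMod p, χ y :=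
          Fintype.sum_bijective _ hbij _ _ (fun ξ => rfl)
      _ = 0 := χ_sum_eq_zero



lemma ft1_eq (f : ZMod p → ℂ) (ξ : ZMod p) :
    ft1 f ξ = (p : ℂ)⁻¹ * ∑ x : ZMod p, f x * χ (ξ * x) := by
  simp only [ft1, χ, eZ]
  norm_cast

lemma pairing (f g : ZMod p → ℂ) :
    (p : ℂ) * ∑ ξ : ZMod p, ft1 f ξ * ft1 g (-ξ) = ∑ x : ZMod p, f x * g x := by
  have h1 : ∀ ξ : ZMod p, ft1 f ξ * ft1 g (-ξ) =
      ∑ x : ZMod p, ∑ y : ZMod p,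
        (p:ℂ)⁻¹ * (p:ℂ)⁻¹ * (f x * g y * χ (ξ * (x - y))) := by
    intro ξ
    rw [ft1_eq, ft1_eq, mul_mul_mul_comm, Finset.sum_mul_sum, Finset.mul_sum]
    refine Finset.sum_congr rfl fun x _ => ?_
    rw [Finset.mul_sum]
    refine Finset.sum_congr rfl fun y _ => ?_
    have hχ : χ (ξ * x) * χ (-ξ * y) = χ (ξ * (x - y)) := by
      rw [← χ_add]
      congr 1
      ring
    linear_combination ((p:ℂ)⁻¹ * (p:ℂ)⁻¹ * f x * g y) * hχ
  rw [Finset.sum_congr rfl fun ξ _ => h1 ξ, Finset.sum_comm]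
  have h2 : ∀ x : ZMod p, ∑ ξ : ZMod p, ∑ y : ZMod p,
      (p:ℂ)⁻¹ * (p:ℂ)⁻¹ * (f x * g y * χ (ξ * (x - y))) =
      ∑ y : ZMod p, ∑ ξ : ZMod p,
      (p:ℂ)⁻¹ * (p:ℂ)⁻¹ * (f x * g y * χ (ξ * (x - y))) := fun x => Finset.sum_comm
  rw [Finset.sum_congr rfl fun x _ => h2 x]
  have h3 : ∀ x y : ZMod p, ∑ ξ : ZMod p,
      (p:ℂ)⁻¹ * (p:ℂ)⁻¹ * (f x * g y * χ (ξ * (x - y))) =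
      if y = x then (p:ℂ)⁻¹ * (f x * g y) else 0 := by
    intro x y
    have : ∀ ξ : ZMod p, (p:ℂ)⁻¹ * (p:ℂ)⁻¹ * (f x * g y * χ (ξ * (x - y))) =
        ((p:ℂ)⁻¹ * (p:ℂ)⁻¹ * (f x * g y)) * χ (ξ * (x - y)) := fun ξ => by ring
    rw [Finset.sum_congr rfl fun ξ _ => this ξ, ← Finset.mul_sum, orth]
    by_cases hxy : x - y = 0
    · have : y = x := by rw [sub_eq_zero] at hxy; exact hxy.symm
      rw [if_pos hxy, if_pos this]
      field_simp [pne0]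
    · have : ¬ (y = x) := fun h => hxy (by rw [h, sub_self])
      rw [if_neg hxy, if_neg this, mul_zero]
  rw [Finset.sum_congr rfl fun x _ => Finset.sum_congr rfl fun y _ => h3 x y]
  have h4 : ∀ x : ZMod p, ∑ y : ZMod p, (if y = x then (p:ℂ)⁻¹ * (f x * g y) else 0) =
      (p:ℂ)⁻¹ * (f x * g x) := by
    intro x
    rw [Finset.sum_ite_eq' univ x (fun y => (p:ℂ)⁻¹ * (f x * g y))]
    simp
  rw [Finset.sum_congr rfl fun x _ => h4 x, Finset.mul_sum]
  refine Finset.sum_congr rfl fun x _ => ?_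
  field_simp [pne0]
  rw [mul_assoc]; exact mul_div_cancel_left₀ _ pne0

lemma conj_ft1 (g : ZMod p → ℂ) (ξ : ZMod p) :
    (starRingEnd ℂ) (ft1 g ξ) = ft1 (fun x => (starRingEnd ℂ) (g x)) (-ξ) := by
  rw [ft1_eq, ft1_eq, map_mul, map_sum]
  congr 1
  · rw [map_inv₀, Complex.conj_natCast]
  · refine Finset.sum_congr rfl fun x _ => ?_
    rw [map_mul, conj_χ]
    congr 1
    ring

lemma parseval (f : ZMod p → ℂ) :
    ∑ x : ZMod p, (‖f x‖)^2 = p * ∑ ξ : ZMod p, (‖ft1 f ξ‖)^2 := by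
  have key := pairing f (fun x => (starRingEnd ℂ) (f x))
  have h1 : ∀ ξ : ZMod p, ft1 f ξ * ft1 (fun x => (starRingEnd ℂ) (f x)) (-ξ) =
      ((‖ft1 f ξ‖)^2 : ℝ) := by
    intro ξ
    rw [← conj_ft1, Complex.sq_norm]
    push_cast
    rw [Complex.mul_conj]
  have h2 : ∀ x : ZMod p, f x * (starRingEnd ℂ) (f x) = ((‖f x‖)^2 : ℝ) := by
    intro x
    rw [Complex.sq_norm]
    push_cast
    rw [Complex.mul_conj]
  rw [Finset.sum_congr rfl fun ξ _ => h1 ξ, Finset.sum_congr rfl fun x _ => h2 x] at key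
  have : ((∑ x : ZMod p, (‖f x‖)^2 : ℝ) : ℂ) =
      (((p : ℝ) * ∑ ξ : ZMod p, (‖ft1 f ξ‖)^2 : ℝ) : ℂ) := by
    push_cast at key ⊢
    linear_combination -key
  exact_mod_cast this

noncomputable def conv (g : ZMod p → ℂ) (z : ZMod p) : ℂ := ∑ x : ZMod p, g x * g (z - x)

lemma ft1_conv (g : ZMod p → ℂ) (ξ : ZMod p) : ft1 (conv g) ξ = p * (ft1 g ξ)^2 := by
  rw [ft1_eq, ft1_eq]
  have hrhs : (p:ℂ) * ((p:ℂ)⁻¹ * ∑ x : ZMod p, g x * χ (ξ * x))^2 =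
      (p:ℂ)⁻¹ * (∑ x : ZMod p, g x * χ (ξ * x))^2 := by
    field_simp [pne0]
  rw [hrhs]
  congr 1
  rw [sq, Finset.sum_mul_sum]
  have h1 : ∀ z : ZMod p, conv g z * χ (ξ * z) =
      ∑ x : ZMod p, g x * g (z - x) * χ (ξ * z) := by
    intro z; rw [conv, Finset.sum_mul]
  rw [Finset.sum_congr rfl fun z _ => h1 z, Finset.sum_comm]
  refine Finset.sum_congr rfl fun x _ => ?_
  rw [← Equiv.sum_comp (Equiv.addLeft x) (fun z => g x * g (z - x) * χ (ξ * z))]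
  simp only [Equiv.coe_addLeft]
  refine Finset.sum_congr rfl fun y _ => ?_
  rw [add_sub_cancel_left]
  have h3 : ξ * (x + y) = ξ * x + ξ * y := by ring
  rw [h3, χ_add]
  ring

lemma energy_eq (g : ZMod p → ℂ) :
    ∑ ξ : ZMod p, (‖ft1 g ξ‖)^4 =
      ((p:ℝ)^3)⁻¹ * ∑ z : ZMod p, (‖conv g z‖)^2 := by
  have hpR : (p:ℝ) ≠ 0 := Nat.cast_ne_zero.2 hp.out.ne_zero
  have h4 : ∀ ξ : ZMod p, (‖ft1 g ξ‖)^4 =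
      ((p:ℝ)^2)⁻¹ * (‖ft1 (conv g) ξ‖)^2 := by
    intro ξ
    rw [ft1_conv, norm_mul, norm_pow, Complex.norm_natCast, mul_pow, ← pow_mul]
    field_simp
  rw [Finset.sum_congr rfl fun ξ _ => h4 ξ, ← Finset.mul_sum]
  have hpar := parseval (p := p) (conv g)
  have : ∑ ξ : ZMod p, (‖ft1 (conv g) ξ‖)^2 =
      (p:ℝ)⁻¹ * ∑ z : ZMod p, (‖conv g z‖)^2 := by
    rw [hpar]
    field_simp
  rw [this, ← mul_assoc]
  congr 1
  rw [← mul_inv, ← pow_succ]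



lemma counting (f : ZMod p → ℂ) :
    ∑ z : ZMod p, (∑ x : ZMod p,
      (if f x = 0 then (0:ℝ) else 1) * (if f (z - x) = 0 then (0:ℝ) else 1))^2
      = ((T2 (Function.support f)) : ℝ) := by
  classical
  set P : ZMod p × ZMod p × ZMod p → Prop := fun t =>
    f t.2.1 ≠ 0 ∧ f (t.1 - t.2.1) ≠ 0 ∧ f t.2.2 ≠ 0 ∧ f (t.1 - t.2.2) ≠ 0 with hP
  set Q : Finset (ZMod p × ZMod p × ZMod p × ZMod p) :=
    univ.filter (fun q => f q.1 ≠ 0 ∧ f q.2.1 ≠ 0 ∧ f q.2.2.1 ≠ 0 ∧ f q.2.2.2 ≠ 0 ∧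
      q.1 + q.2.1 = q.2.2.1 + q.2.2.2) with hQ
  have step1 : ∑ z : ZMod p, (∑ x : ZMod p,
      (if f x = 0 then (0:ℝ) else 1) * (if f (z - x) = 0 then (0:ℝ) else 1))^2
      = ∑ t : ZMod p × ZMod p × ZMod p, (if P t then (1:ℝ) else 0) := by
    rw [Fintype.sum_prod_type]
    refine Finset.sum_congr rfl fun z _ => ?_
    rw [sq, Finset.sum_mul_sum, Fintype.sum_prod_type]
    refine Finset.sum_congr rfl fun x _ => ?_
    refine Finset.sum_congr rfl fun y _ => ?_
    simp only [hP]
    split_ifs <;> simp_all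
  rw [step1, Finset.sum_boole]
  have step2 : (univ.filter P).card = Q.card := by
    refine Finset.card_nbij' (fun t => (t.2.1, t.1 - t.2.1, t.2.2, t.1 - t.2.2))
      (fun q => (q.1 + q.2.1, q.1, q.2.2.1)) ?_ ?_ ?_ ?_
    · rintro ⟨z, x, y⟩ ht
      change (z, x, y) ∈ univ.filter P at ht
      change (x, z - x, y, z - y) ∈ Q
      simp only [hP, Finset.mem_filter, Finset.mem_univ, true_and] at ht
      simp only [hQ, Finset.mem_filter, Finset.mem_univ, true_and]
      refine ⟨ht.1, ht.2.1, ht.2.2.1, ht.2.2.2, by ring⟩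
    · rintro ⟨x1, x2, x3, x4⟩ hq
      change (x1, x2, x3, x4) ∈ Q at hq
      change (x1 + x2, x1, x3) ∈ univ.filter P
      simp only [hQ, Finset.mem_filter, Finset.mem_univ, true_and] at hq
      simp only [hP, Finset.mem_filter, Finset.mem_univ, true_and]
      have e1 : x1 + x2 - x1 = x2 := by ring
      have e2 : x1 + x2 - x3 = x4 := by rw [hq.2.2.2.2]; ring
      exact ⟨hq.1, by rw [e1]; exact hq.2.1, hq.2.2.1, by rw [e2]; exact hq.2.2.2.1⟩
    · rintro ⟨z, x, y⟩ _
      have e0 : x + (z - x) = z := by ring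
      simp [e0]
    · rintro ⟨x1, x2, x3, x4⟩ hq
      change (x1, x2, x3, x4) ∈ Q at hq
      simp only [hQ, Finset.mem_filter, Finset.mem_univ, true_and] at hq
      have e1 : x1 + x2 - x1 = x2 := by ring
      have e2 : x1 + x2 - x3 = x4 := by rw [hq.2.2.2.2]; ring
      simp [e1, e2]
  rw [step2]
  have step3 : T2 (Function.support f) = Q.card := by
    rw [T2]
    have : {q : ZMod p × ZMod p × ZMod p × ZMod p |
        q.1 ∈ Function.support f ∧ q.2.1 ∈ Function.support f ∧
        q.2.2.1 ∈ Function.support f ∧ q.2.2.2 ∈ Function.support f ∧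
        q.1 + q.2.1 = q.2.2.1 + q.2.2.2} = (↑Q : Set _) := by
      ext q
      simp [hQ, Function.mem_support]
    rw [this, Set.ncard_coe_finset]
  rw [step3]


end S9

end Helpers

set_option maxHeartbeats 1000000 in
/-- There is an absolute constant `c > 0` such that for every prime
`p` and every `f : ZMod p → ℂ` with `|f(x)| ≥ 1` on `S = supp f` (nonempty), setting
`M = max |f|`, one has `T₂(S) ≥ c |S|³ / (M ‖f̂‖₁²)`. -/
theorem stmt9 :
    ∃ c > (0:ℝ), ∀ (p : ℕ) [Fact p.Prime], ∀ (f : ZMod p → ℂ) (M : ℝ),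
      (Function.support f).Nonempty →
      (∀ x ∈ Function.support f, 1 ≤ ‖f x‖) →
      IsGreatest (Set.range fun x => ‖f x‖) M →
      c * ((Function.support f).ncard : ℝ) ^ 3 / (M * wiener1 f ^ 2) ≤
        (T2 (Function.support f) : ℝ) := by
  classical
  refine ⟨1, one_pos, ?_⟩
  intro p _inst f M hne hlow hM
  set a : ZMod p → ℝ := fun ξ => ‖ft1 f ξ‖ with ha
  set g : ZMod p → ℂ := fun x => if f x = 0 then 0
    else (starRingEnd ℂ) (f x) / ((‖f x‖ : ℝ) : ℂ) with hg
  set b : ZMod p → ℝ := fun ξ => ‖ft1 g (-ξ)‖ with hb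
  set L : ℝ := ∑ x : ZMod p, ‖f x‖ with hLdef
  set T : ℝ := ((T2 (Function.support f)) : ℝ) with hTdef
  set n : ℝ := ((Function.support f).ncard : ℝ) with hndef
  set W : ℝ := wiener1 f with hWdef
  have hWa : W = ∑ ξ : ZMod p, a ξ := rfl
  have hpPrime : p.Prime := Fact.out
  have hpR : (0:ℝ) < p := by exact_mod_cast hpPrime.pos
  have hpR0 : (p:ℝ) ≠ 0 := ne_of_gt hpR
  -- support as finset
  set S : Finset (ZMod p) := Finset.univ.filter (fun x => f x ≠ 0) with hSdef
  have hsupp : Function.support f = (↑S : Set (ZMod p)) := by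
    ext x; simp [hSdef, Function.mem_support]
  have hncard : n = (S.card : ℝ) := by
    rw [hndef, hsupp, Set.ncard_coe_finset]
  obtain ⟨x0, hx0⟩ := hne
  have hx0S : x0 ∈ S := by
    simp only [hSdef, Finset.mem_filter, Finset.mem_univ, true_and]
    exact hx0
  have hn1 : (1:ℝ) ≤ n := by
    rw [hncard]
    exact_mod_cast Finset.card_pos.2 ⟨x0, hx0S⟩
  have hM1 : (1:ℝ) ≤ M := le_trans (hlow x0 hx0) (hM.2 ⟨x0, rfl⟩)
  have habsM : ∀ x : ZMod p, ‖f x‖ ≤ M := fun x => hM.2 ⟨x, rfl⟩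
  have hLnn : (0:ℝ) ≤ L := Finset.sum_nonneg fun x _ => norm_nonneg _
  have hnL : n ≤ L := by
    rw [hncard]
    calc (S.card : ℝ) = ∑ _x ∈ S, (1:ℝ) := by simp
    _ ≤ ∑ x ∈ S, ‖f x‖ := by
        refine Finset.sum_le_sum fun x hx => ?_
        refine hlow x ?_
        rw [hsupp]; exact_mod_cast hx
    _ ≤ L := by
        rw [hLdef]
        refine Finset.sum_le_sum_of_subset_of_nonneg (Finset.subset_univ S)
          fun x _ _ => norm_nonneg _
  have hL0 : (0:ℝ) < L := lt_of_lt_of_le (lt_of_lt_of_le one_pos hn1) hnL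
  -- the pairing identity
  have hfg : ∀ x : ZMod p, f x * g x = ((‖f x‖ : ℝ) : ℂ) := by
    intro x
    by_cases hx : f x = 0
    · simp [hg, hx]
    · simp only [hg, if_neg hx]
      have h0 : ((‖f x‖ : ℝ) : ℂ) ≠ 0 :=
        Complex.ofReal_ne_zero.2 (norm_ne_zero_iff.2 hx)
      rw [mul_div_assoc', div_eq_iff h0, Complex.mul_conj, Complex.normSq_eq_norm_sq]
      push_cast
      ring
  have hkey : ((L : ℝ) : ℂ) = (p:ℂ) * ∑ ξ : ZMod p, ft1 f ξ * ft1 g (-ξ) := by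
    rw [S9.pairing f g, Finset.sum_congr rfl fun x _ => hfg x, hLdef]
    push_cast
    rfl
  set C : ℝ := ∑ ξ : ZMod p, a ξ * b ξ with hCdef
  set D : ℝ := ∑ ξ : ZMod p, a ξ * b ξ^2 with hDdef
  set A : ℝ := ∑ ξ : ZMod p, a ξ^2 with hAdef
  set B : ℝ := ∑ ξ : ZMod p, (b ξ^2)^2 with hBdef
  have hann : ∀ ξ, 0 ≤ a ξ := fun ξ => norm_nonneg _
  have hbnn : ∀ ξ, 0 ≤ b ξ := fun ξ => norm_nonneg _
  have hCnn : 0 ≤ C := Finset.sum_nonneg fun ξ _ => mul_nonneg (hann ξ) (hbnn ξ)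
  have hDnn : 0 ≤ D := Finset.sum_nonneg fun ξ _ => mul_nonneg (hann ξ) (sq_nonneg _)
  have hBnn : 0 ≤ B := Finset.sum_nonneg fun ξ _ => sq_nonneg _
  have hWnn : 0 ≤ W := by rw [hWa]; exact Finset.sum_nonneg fun ξ _ => hann ξ
  have hTnn : 0 ≤ T := by rw [hTdef]; positivity
  have hLC : L ≤ (p:ℝ) * C := by
    have h0 : L = ‖((L:ℝ):ℂ)‖ := by
      rw [Complex.norm_real, Real.norm_eq_abs, abs_of_nonneg hLnn]
    rw [h0, hkey, norm_mul, Complex.norm_natCast]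
    refine mul_le_mul_of_nonneg_left ?_ hpR.le
    refine le_trans (norm_sum_le _ _) (le_of_eq ?_)
    refine Finset.sum_congr rfl fun ξ _ => ?_
    rw [norm_mul]
  have hCS1 : C^2 ≤ W * D := by
    rw [hWa, hCdef, hDdef]
    exact Finset.sum_sq_le_sum_mul_sum_of_sq_eq_mul Finset.univ
      (fun ξ _ => hann ξ) (fun ξ _ => mul_nonneg (hann ξ) (sq_nonneg _))
      (fun ξ _ => by ring)
  have hCS2 : D^2 ≤ A * B := by
    rw [hDdef, hAdef, hBdef]
    exact Finset.sum_mul_sq_le_sq_mul_sq Finset.univ a (fun ξ => b ξ^2)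
  have hA : A ≤ (p:ℝ)⁻¹ * (M * L) := by
    have hpar := S9.parseval f
    have h1 : ∑ x : ZMod p, (‖f x‖)^2 ≤ M * L := by
      rw [hLdef, Finset.mul_sum]
      refine Finset.sum_le_sum fun x _ => ?_
      rw [sq]
      exact mul_le_mul_of_nonneg_right (habsM x) (norm_nonneg _)
    have h2 : (p:ℝ) * A ≤ M * L := by rw [hAdef, ← hpar]; exact h1
    rw [inv_mul_eq_div, le_div_iff₀ hpR]
    linarith
  have hB : B ≤ ((p:ℝ)^3)⁻¹ * T := by
    have h1 : B = ∑ ξ : ZMod p, (‖ft1 g ξ‖)^4 := by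
      rw [hBdef]
      rw [← Equiv.sum_comp (Equiv.neg (ZMod p)) (fun ξ => (‖ft1 g ξ‖)^4)]
      refine Finset.sum_congr rfl fun ξ _ => ?_
      simp only [Equiv.neg_apply, hb]
      ring
    rw [h1, S9.energy_eq g]
    refine mul_le_mul_of_nonneg_left ?_ (by positivity)
    have hgx : ∀ y : ZMod p, ‖g y‖ ≤ (if f y = 0 then (0:ℝ) else 1) := by
      intro y
      by_cases hy : f y = 0
      · simp [hg, hy]
      · simp only [hg, if_neg hy]
        rw [norm_div, Complex.norm_conj, Complex.norm_real,
          norm_norm,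
          div_self (norm_ne_zero_iff.2 hy)]
    have hconv : ∀ z : ZMod p, ‖S9.conv g z‖ ≤ ∑ x : ZMod p,
        (if f x = 0 then (0:ℝ) else 1) * (if f (z - x) = 0 then (0:ℝ) else 1) := by
      intro z
      refine le_trans (norm_sum_le _ _) (Finset.sum_le_sum fun x _ => ?_)
      rw [norm_mul]
      exact mul_le_mul (hgx x) (hgx (z - x)) (norm_nonneg _)
        (by positivity)
    calc ∑ z : ZMod p, (‖S9.conv g z‖)^2
        ≤ ∑ z : ZMod p, (∑ x : ZMod p,
            (if f x = 0 then (0:ℝ) else 1) * (if f (z - x) = 0 then (0:ℝ) else 1))^2 := by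
          refine Finset.sum_le_sum fun z _ => ?_
          exact pow_le_pow_left₀ (norm_nonneg _) (hconv z) 2
      _ = T := by rw [S9.counting f, hTdef]
  -- combine
  have h11 : L^2 ≤ ((p:ℝ)*C)^2 := pow_le_pow_left₀ hLnn hLC 2
  have h14 : L^2 ≤ (p:ℝ)^2 * (W * D) := by
    have h13 : (p:ℝ)^2 * C^2 ≤ (p:ℝ)^2 * (W * D) :=
      mul_le_mul_of_nonneg_left hCS1 (by positivity)
    nlinarith [h11, h13]
  have h15 : (L^2)^2 ≤ ((p:ℝ)^2 * (W * D))^2 := pow_le_pow_left₀ (sq_nonneg L) h14 2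
  have h18 : (p:ℝ)^4 * W^2 * D^2 ≤ (p:ℝ)^4 * W^2 * (A * B) :=
    mul_le_mul_of_nonneg_left hCS2 (by positivity)
  have h19 : A * B ≤ ((p:ℝ)⁻¹ * (M * L)) * (((p:ℝ)^3)⁻¹ * T) := by
    have hAnn : 0 ≤ A := Finset.sum_nonneg fun ξ _ => sq_nonneg _
    refine mul_le_mul hA hB hBnn ?_
    have : 0 ≤ M := le_trans zero_le_one hM1
    positivity
  have h20 : (p:ℝ)^4 * W^2 * (A * B) ≤
      (p:ℝ)^4 * W^2 * (((p:ℝ)⁻¹ * (M * L)) * (((p:ℝ)^3)⁻¹ * T)) :=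
    mul_le_mul_of_nonneg_left h19 (by positivity)
  have h21 : (p:ℝ)^4 * W^2 * (((p:ℝ)⁻¹ * (M * L)) * (((p:ℝ)^3)⁻¹ * T)) =
      M * W^2 * (L * T) := by
    field_simp
  have hchain : L^4 ≤ M * W^2 * (L * T) := by
    have e1 : L^4 = (L^2)^2 := by ring
    have e2 : ((p:ℝ)^2 * (W * D))^2 = (p:ℝ)^4 * W^2 * D^2 := by ring
    calc L^4 = (L^2)^2 := e1
      _ ≤ ((p:ℝ)^2 * (W * D))^2 := h15
      _ = (p:ℝ)^4 * W^2 * D^2 := e2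
      _ ≤ (p:ℝ)^4 * W^2 * (A * B) := h18
      _ ≤ (p:ℝ)^4 * W^2 * (((p:ℝ)⁻¹ * (M * L)) * (((p:ℝ)^3)⁻¹ * T)) := h20
      _ = M * W^2 * (L * T) := h21
  have hL3 : L^3 ≤ M * W^2 * T := by
    have h0 : L^3 * L ≤ (M * W^2 * T) * L := by
      calc L^3 * L = L^4 := by ring
        _ ≤ M * W^2 * (L * T) := hchain
        _ = (M * W^2 * T) * L := by ring
    exact le_of_mul_le_mul_right h0 hL0
  have hn3 : n^3 ≤ M * W^2 * T :=
    le_trans (pow_le_pow_left₀ (le_trans zero_le_one hn1) hnL 3) hL3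
  have hMW : 0 < M * W^2 := by
    rcases lt_or_ge 0 (M * W^2) with h | h
    · exact h
    · exfalso
      have h1n : (1:ℝ)^3 ≤ n^3 := pow_le_pow_left₀ zero_le_one hn1 3
      nlinarith [hn3, h1n, hTnn, h]
  rw [one_mul, div_le_iff₀ hMW]
  calc n^3 ≤ M * W^2 * T := hn3
    _ = T * (M * W^2) := by ring
end

section
/- Let p be a prime, d ≥ 2, and A ⊆ (ℤ/pℤ)^d with |A| = δ p^d. Then there exists a hyperplane L ⊂ (ℤ/pℤ)^d such that | |A ∩ L| − δ p^{d−1} | ≤ δ^{1/2} p^{(d−1)/2}. -/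
open scoped BigOperators

def dotHom (p d : ℕ) [NeZero p] (v : Fin d → ZMod p) : (Fin d → ZMod p) →+ ZMod p where
  toFun η := ∑ j, v j * η j
  map_zero' := by simp
  map_add' a b := by simp [mul_add, Finset.sum_add_distrib]

lemma aux_ker (p : ℕ) [Fact p.Prime] (d : ℕ) (hd : 1 ≤ d) (v : Fin d → ZMod p) (hv : v ≠ 0) :
    (Finset.univ.filter (fun η : Fin d → ZMod p => ∑ i, v i * η i = 0)).card = p ^ (d - 1) := by
  obtain ⟨i, hi⟩ : ∃ i, v i ≠ 0 := by
    by_contra h; push_neg at h; exact hv (funext h)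
  set φ := dotHom p d v with hφ
  have hsurj : Function.Surjective φ := by
    intro u
    refine ⟨Pi.single i ((v i)⁻¹ * u), ?_⟩
    show ∑ j : Fin d, v j * Pi.single (M := fun _ => ZMod p) i ((v i)⁻¹ * u) j = u
    rw [Finset.sum_eq_single i]
    · rw [Pi.single_eq_same, ← mul_assoc, mul_inv_cancel₀ hi, one_mul]
    · intro j _ hj; rw [Pi.single_eq_of_ne hj, mul_zero]
    · intro h; exact absurd (Finset.mem_univ i) h
  have hcard : Nat.card (Fin d → ZMod p) = Nat.card ((Fin d → ZMod p) ⧸ φ.ker) * Nat.card φ.ker :=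
    AddSubgroup.card_eq_card_quotient_mul_card_addSubgroup φ.ker
  have hq : Nat.card ((Fin d → ZMod p) ⧸ φ.ker) = p := by
    rw [Nat.card_congr (QuotientAddGroup.quotientKerEquivOfSurjective φ hsurj).toEquiv]
    simp [Nat.card_eq_fintype_card]
  have hv' : Nat.card (Fin d → ZMod p) = p ^ d := by
    simp [Nat.card_eq_fintype_card]
  have hker : (Finset.univ.filter (fun η : Fin d → ZMod p => ∑ i, v i * η i = 0)).card
      = Nat.card φ.ker := by
    have hmem : ∀ η : Fin d → ZMod p, η ∈ φ.ker ↔ ∑ i, v i * η i = 0 := by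
      intro η; exact Iff.rfl
    rw [Nat.card_eq_fintype_card]
    rw [Fintype.card_congr (Equiv.subtypeEquivRight hmem)]
    exact (Fintype.card_subtype _).symm
  rw [hker]
  have hp : 0 < p := (Fact.out : p.Prime).pos
  have hpd : p ^ d = p * Nat.card φ.ker := by
    rw [hv'] at hcard
    rw [hq] at hcard
    exact hcard
  have hdd : d = (d - 1) + 1 := (Nat.succ_pred_eq_of_pos hd).symm
  have h2 : p * p ^ (d - 1) = p * Nat.card φ.ker := by
    rw [← hpd]
    conv_rhs => rw [hdd]
    rw [pow_succ, mul_comm]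
  exact (Nat.eq_of_mul_eq_mul_left hp h2).symm


set_option maxHeartbeats 1000000 in
/-- Let `p` be a prime, `d ≥ 2`, `A ⊆ (ZMod p)^d` with `|A| = δ p^d`.
Then there is a hyperplane `L = {x : x·η = u}` (`η ≠ 0`) such that
`||A ∩ L| - δ p^{d-1}| ≤ δ^{1/2} p^{(d-1)/2}`. -/
theorem stmt12 (p : ℕ) [Fact p.Prime] (d : ℕ) (hd : 2 ≤ d)
    (A : Set (Fin d → ZMod p)) (δ : ℝ) (hA : (A.ncard : ℝ) = δ * (p : ℝ) ^ d) :
    ∃ η : Fin d → ZMod p, η ≠ 0 ∧ ∃ u : ZMod p,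
      |((A ∩ {x | ∑ i, x i * η i = u}).ncard : ℝ) - δ * (p : ℝ) ^ (d - 1)| ≤
        δ ^ ((1:ℝ)/2) * (p : ℝ) ^ (((d : ℝ) - 1) / 2) := by
  classical
  have hp : 0 < p := (Fact.out : p.Prime).pos
  have hp1 : 1 < p := (Fact.out : p.Prime).one_lt
  have hd1 : 1 ≤ d := le_trans one_le_two hd
  have hdd : d = (d - 1) + 1 := (Nat.succ_pred_eq_of_pos hd1).symm
  set As : Finset (Fin d → ZMod p) := (Set.toFinite A).toFinset with hAs
  set a : ℕ := As.card with ha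
  have hacast : (a : ℝ) = δ * (p : ℝ) ^ d := by
    rw [← hA]; congr 1
    rw [ha, hAs, Set.ncard_eq_toFinset_card' A]
    congr 1
    ext x; simp
  have hppow : (0:ℝ) < (p:ℝ) ^ d := by positivity
  have hδ0 : 0 ≤ δ := by
    by_contra hneg
    push_neg at hneg
    have : (a:ℝ) < 0 := by rw [hacast]; exact mul_neg_of_neg_of_pos hneg hppow
    exact absurd this (not_lt.mpr (Nat.cast_nonneg a))
  set m : ℝ := δ * (p : ℝ) ^ (d - 1) with hm_def
  have hm0 : 0 ≤ m := by positivity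
  have hm : (p:ℝ) * m = a := by
    rw [hm_def, hacast]
    have : (p:ℝ) ^ d = (p:ℝ) ^ (d-1) * p := by
      conv_lhs => rw [hdd]
      rw [pow_succ]
    rw [this]; ring
  set N : (Fin d → ZMod p) → ZMod p → ℕ :=
    fun η u => (As.filter fun x => ∑ i, x i * η i = u).card with hN
  -- sum over u of N is a
  have key1 : ∀ η, ∑ u : ZMod p, N η u = a := by
    intro η
    symm
    apply Finset.card_eq_sum_card_fiberwise
    intro x _
    exact Finset.mem_univ _
  -- second moment identity per η
  have key2 : ∀ η, ∑ u : ZMod p, (N η u)^2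
      = ∑ x ∈ As, ∑ y ∈ As, (if (∑ i, y i * η i) = (∑ i, x i * η i) then 1 else 0) := by
    intro η
    have step1 : ∀ u : ZMod p, (N η u)^2
        = ∑ x ∈ As.filter (fun x => ∑ i, x i * η i = u), N η (∑ i, x i * η i) := by
      intro u
      rw [Finset.sum_congr rfl (fun x hx => by
        rw [(Finset.mem_filter.mp hx).2])]
      rw [Finset.sum_const, smul_eq_mul, sq]
    calc ∑ u : ZMod p, (N η u)^2
        = ∑ u : ZMod p, ∑ x ∈ As.filter (fun x => ∑ i, x i * η i = u),
            N η (∑ i, x i * η i) := by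
          exact Finset.sum_congr rfl (fun u _ => step1 u)
      _ = ∑ x ∈ As, N η (∑ i, x i * η i) := by
          apply Finset.sum_fiberwise_of_maps_to
          intro x _
          exact Finset.mem_univ _
      _ = ∑ x ∈ As, ∑ y ∈ As, (if (∑ i, y i * η i) = (∑ i, x i * η i) then 1 else 0) := by
          exact Finset.sum_congr rfl (fun x _ => Finset.card_filter _ _)
  -- set of nonzero frequencies
  set S : Finset (Fin d → ZMod p) := Finset.univ.filter (fun η => η ≠ 0) with hS
  have hScard : S.card = p ^ d - 1 := by
    rw [hS, Finset.filter_ne', Finset.card_erase_of_mem (Finset.mem_univ _), Finset.card_univ]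
    congr 1
    simp [ZMod.card]
  have hSne : S.Nonempty := by
    refine ⟨Pi.single ⟨0, by omega⟩ 1, ?_⟩
    rw [hS, Finset.mem_filter]
    refine ⟨Finset.mem_univ _, ?_⟩
    intro hcon
    have := congrFun hcon ⟨0, by omega⟩
    rw [Pi.single_eq_same] at this
    exact one_ne_zero this
  -- the pair count
  have keyE : ∀ x y : Fin d → ZMod p,
      (∑ η ∈ S, (if (∑ i, y i * η i) = (∑ i, x i * η i) then 1 else 0))
      = if x = y then p ^ d - 1 else p ^ (d-1) - 1 := by
    intro x y
    by_cases hxy : x = y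
    · subst hxy
      simp [hScard]
    · rw [if_neg hxy]
      have hcond : ∀ η : Fin d → ZMod p,
          ((∑ i, y i * η i) = (∑ i, x i * η i)) ↔ (∑ i, (fun i => y i - x i) i * η i = 0) := by
        intro η
        rw [← sub_eq_zero]
        constructor
        · intro h; rw [← h]; simp [sub_mul, Finset.sum_sub_distrib]
        · intro h; rw [← h]; simp [sub_mul, Finset.sum_sub_distrib]
      have hv : (fun i => y i - x i) ≠ 0 := by
        intro hcon
        apply hxy
        funext i
        have := congrFun hcon i
        simp only [Pi.zero_apply, sub_eq_zero] at this
        exact this.symm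
      rw [← Finset.card_filter]
      have : S.filter (fun η => (∑ i, y i * η i) = (∑ i, x i * η i))
          = (Finset.univ.filter (fun η : Fin d → ZMod p =>
              ∑ i, (fun i => y i - x i) i * η i = 0)).erase 0 := by
        rw [hS, Finset.filter_ne', Finset.filter_erase]
        congr 1
        exact Finset.filter_congr (fun η _ => by rw [hcond η])
      rw [this, Finset.card_erase_of_mem, aux_ker p d hd1 _ hv]
      rw [Finset.mem_filter]
      exact ⟨Finset.mem_univ _, by simp⟩
  -- total second moment
  set T : ℕ := ∑ η ∈ S, ∑ u : ZMod p, (N η u)^2 with hT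
  have hTval : T = a * ((p ^ d - 1) + (a - 1) * (p ^ (d-1) - 1)) := by
    rw [hT]
    rw [Finset.sum_congr rfl (fun η _ => key2 η)]
    rw [Finset.sum_comm]
    rw [Finset.sum_congr rfl (fun x _ => Finset.sum_comm)]
    have inner : ∀ x ∈ As, (∑ y ∈ As, ∑ η ∈ S,
        (if (∑ i, y i * η i) = (∑ i, x i * η i) then 1 else 0))
        = (p ^ d - 1) + (a - 1) * (p ^ (d-1) - 1) := by
      intro x hx
      rw [Finset.sum_congr rfl (fun y _ => keyE x y)]
      rw [← Finset.add_sum_erase _ _ hx, if_pos rfl]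
      congr 1
      rw [Finset.sum_congr rfl (fun y hy => if_neg (Finset.ne_of_mem_erase hy).symm)]
      rw [Finset.sum_const, smul_eq_mul, Finset.card_erase_of_mem hx]
    rw [Finset.sum_congr rfl inner, Finset.sum_const, smul_eq_mul]
  -- natural number bound
  have hnat : T * p ≤ (p ^ d - 1) * a * p + (p ^ d - 1) * a ^ 2 := by
    have h1 : (p ^ (d-1) - 1) * p ≤ p ^ d - 1 := by
      rw [Nat.sub_mul, one_mul, ← pow_succ]
      have : (d - 1) + 1 = d := hdd.symm
      rw [this]
      have hp2 : p ≥ 1 := le_of_lt hp1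
      omega
    have h2 : a * ((a-1) * (p ^ (d-1) - 1)) * p ≤ (p ^ d - 1) * a ^ 2 := by
      calc a * ((a-1) * (p ^ (d-1) - 1)) * p = (a * (a-1)) * ((p ^ (d-1) - 1) * p) := by ring
        _ ≤ (a * a) * (p ^ d - 1) :=
            Nat.mul_le_mul (Nat.mul_le_mul_left a (Nat.sub_le a 1)) h1
        _ = (p ^ d - 1) * a ^ 2 := by ring
    calc T * p = a * (p ^ d - 1) * p + a * ((a-1) * (p ^ (d-1) - 1)) * p := by
          rw [hTval]; ring
      _ ≤ a * (p ^ d - 1) * p + (p ^ d - 1) * a ^ 2 := Nat.add_le_add_left h2 _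
      _ = (p ^ d - 1) * a * p + (p ^ d - 1) * a ^ 2 := by ring
  -- real variance
  have expand : ∀ η, ∑ u : ZMod p, ((N η u : ℝ) - m)^2
      = (∑ u : ZMod p, ((N η u : ℝ))^2) - m * a := by
    intro η
    have h1 : ∑ u : ZMod p, ((N η u : ℝ)) = a := by
      rw [← Nat.cast_sum, key1 η]
    have h2 : ((Finset.univ : Finset (ZMod p)).card : ℝ) = p := by
      rw [Finset.card_univ]; simp [ZMod.card]
    have hexp : ∀ u : ZMod p, ((N η u : ℝ) - m)^2
        = ((N η u : ℝ)^2 - 2*m*(N η u : ℝ)) + m^2 := fun u => by ring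
    rw [Finset.sum_congr rfl (fun u _ => hexp u), Finset.sum_add_distrib,
      Finset.sum_sub_distrib, ← Finset.mul_sum, Finset.sum_const, nsmul_eq_mul, h1, h2]
    linear_combination m * hm
  set Sr : ℝ := ∑ η ∈ S, ∑ u : ZMod p, ((N η u : ℝ) - m)^2 with hSr
  have hSrval : Sr = (T : ℝ) - (S.card : ℝ) * (m * a) := by
    rw [hSr, Finset.sum_congr rfl (fun η _ => expand η), Finset.sum_sub_distrib,
      Finset.sum_const, nsmul_eq_mul]
    congr 1
    rw [hT]
    push_cast
    rfl
  have hX : ((p ^ d - 1 : ℕ) : ℝ) = (S.card : ℝ) := by rw [hScard]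
  have hSrle : Sr ≤ (S.card : ℝ) * a := by
    have hc : (T : ℝ) * p ≤ ((p ^ d - 1 : ℕ) : ℝ) * a * p + ((p ^ d - 1 : ℕ) : ℝ) * a ^ 2 := by
      exact_mod_cast hnat
    rw [hX] at hc
    have hp' : (0:ℝ) < p := by exact_mod_cast hp
    rw [hSrval]
    rw [← mul_le_mul_iff_left₀ hp']
    have e : ((S.card : ℝ)) * (m * (a:ℝ)) * (p:ℝ) = (S.card : ℝ) * (a:ℝ)^2 := by
      linear_combination ((S.card : ℝ) * (a:ℝ)) * hm
    nlinarith [hc, e]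
  -- pigeonhole
  have hex : ∃ η ∈ S, ∃ u : ZMod p, ((N η u : ℝ) - m)^2 ≤ m := by
    by_contra hcon
    push_neg at hcon
    have hlt : (S.card : ℝ) * ((p:ℝ) * m) < Sr := by
      have hinner : ∀ η : Fin d → ZMod p, ∑ _u : ZMod p, m = (p:ℝ) * m := by
        intro η
        rw [Finset.sum_const, Finset.card_univ, ZMod.card, nsmul_eq_mul]
      have : (S.card : ℝ) * ((p:ℝ) * m) = ∑ η ∈ S, ∑ _u : ZMod p, m := by
        rw [Finset.sum_congr rfl (fun η _ => hinner η), Finset.sum_const, nsmul_eq_mul]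
      rw [this, hSr]
      refine Finset.sum_lt_sum_of_nonempty hSne (fun η hη => ?_)
      refine Finset.sum_lt_sum_of_nonempty Finset.univ_nonempty (fun u _ => ?_)
      exact hcon η hη u
    rw [hm] at hlt
    linarith
  obtain ⟨η, hη, u, hNu⟩ := hex
  have hη0 : η ≠ 0 := (Finset.mem_filter.mp hη).2
  refine ⟨η, hη0, u, ?_⟩
  have hncard : ((A ∩ {x | ∑ i, x i * η i = u}).ncard : ℝ) = (N η u : ℝ) := by
    congr 1
    rw [hN]
    have : (A ∩ {x | ∑ i, x i * η i = u})
        = ↑(As.filter fun x => ∑ i, x i * η i = u) := by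
      ext x
      simp only [hAs, Set.Finite.mem_toFinset, Finset.coe_filter, Set.mem_setOf_eq,
        Set.mem_inter_iff]
    rw [this, Set.ncard_coe_finset]
  rw [hncard]
  have habs : |(N η u : ℝ) - m| ≤ Real.sqrt m := by
    rw [← Real.sqrt_sq_eq_abs]
    exact Real.sqrt_le_sqrt hNu
  have hsq : Real.sqrt m = δ ^ ((1:ℝ)/2) * (p:ℝ) ^ (((d:ℝ)-1)/2) := by
    rw [hm_def, Real.sqrt_mul hδ0, Real.sqrt_eq_rpow, Real.sqrt_eq_rpow]
    congr 1
    rw [← Real.rpow_natCast (p:ℝ) (d-1), ← Real.rpow_mul (by positivity)]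
    congr 1
    rw [Nat.cast_sub hd1]
    push_cast
    ring
  rw [← hsq]
  exact habs
end

section
/- There is an absolute constant C > 0 such that the following holds. Let p be a prime, d ≥ 2, and A ⊆ (ℤ/pℤ)^d with |A| = δ p^d and δ ≥ C p^{-1}. Then there exists a line l ⊂ (ℤ/pℤ)^d such that | |A ∩ l| − δ p | ≤ δ^{1/2} p^{1/2} + C (δ^{1/2} + p^{-1/2}). -/
open scoped BigOperators

/-- There is an absolute constant `C > 0` such that: for every prime
`p`, `d ≥ 2`, and `A ⊆ (ZMod p)^d` with `|A| = δ p^d` and `δ ≥ C p⁻¹`, there is a line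
`l = {ub + c : u ∈ ZMod p}` (`b ≠ 0`) with
`||A ∩ l| - δ p| ≤ δ^{1/2} p^{1/2} + C(δ^{1/2} + p^{-1/2})`. -/
theorem stmt13 :
    ∃ C > (0:ℝ), ∀ (p : ℕ) [Fact p.Prime], ∀ d : ℕ, 2 ≤ d →
      ∀ (A : Set (Fin d → ZMod p)) (δ : ℝ),
        (A.ncard : ℝ) = δ * (p : ℝ) ^ d → C * (p : ℝ)⁻¹ ≤ δ →
        ∃ b c : Fin d → ZMod p, b ≠ 0 ∧
          |((A ∩ {x | ∃ u : ZMod p, x = fun i => u * b i + c i}).ncard : ℝ) - δ * p| ≤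
            δ ^ ((1:ℝ)/2) * (p : ℝ) ^ ((1:ℝ)/2) +
              C * (δ ^ ((1:ℝ)/2) + (p : ℝ) ^ (-(1:ℝ)/2)) := by
  classical
  refine ⟨1, one_pos, ?_⟩
  intro p hpF d hd A δ hcard hδ
  have hp := hpF.out
  have hp2 : (2:ℝ) ≤ (p:ℝ) := by exact_mod_cast hp.two_le
  have hq0 : (0:ℝ) < (p:ℝ) := by linarith
  set q : ℝ := (p:ℝ) with hqdef
  set Nr : ℝ := q ^ d with hNdef
  have hq1 : (1:ℝ) ≤ q := by linarith
  have hNq : q ≤ Nr := by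
    calc q = q^1 := (pow_one q).symm
    _ ≤ q^d := pow_le_pow_right₀ hq1 (by omega)
  have hN4 : (4:ℝ) ≤ Nr := by
    calc (4:ℝ) = 2^2 := by norm_num
    _ ≤ q^2 := by nlinarith
    _ ≤ q^d := pow_le_pow_right₀ hq1 hd
  have hδ0 : 0 < δ := lt_of_lt_of_le (by rw [one_mul]; exact inv_pos.mpr hq0) hδ
  -- cardinality facts
  have hcardΩ : Fintype.card (Fin d → ZMod p) = p ^ d := by simp [ZMod.card]
  have hcardΩR : ((Fintype.card (Fin d → ZMod p)) : ℝ) = Nr := by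
    rw [hcardΩ]; push_cast; rfl
  have hcardEraseR : (((Finset.univ.erase (0 : Fin d → ZMod p)).card) : ℝ) = Nr - 1 := by
    rw [Finset.card_erase_of_mem (Finset.mem_univ 0), Finset.card_univ, Nat.cast_sub]
    · rw [hcardΩR]; norm_num
    · rw [hcardΩ]; exact pow_pos hp.pos d
  have hcardZR : (((Finset.univ : Finset (ZMod p))).card : ℝ) = q := by
    rw [Finset.card_univ, ZMod.card]
  have hcardZEraseR : ∀ u : ZMod p, (((Finset.univ.erase u).card) : ℝ) = q - 1 := by
    intro u
    rw [Finset.card_erase_of_mem (Finset.mem_univ u), Finset.card_univ, ZMod.card, Nat.cast_sub hp.one_le]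
    norm_num
    rfl
  have hcardle : (A.ncard : ℝ) ≤ Nr := by
    have h1 := Set.ncard_le_ncard (Set.subset_univ A) Set.finite_univ
    have h2 : (Set.univ : Set (Fin d → ZMod p)).ncard = p ^ d := by
      rw [Set.ncard_univ, Nat.card_eq_fintype_card, hcardΩ]
    rw [h2] at h1
    calc (A.ncard : ℝ) ≤ ((p ^ d : ℕ) : ℝ) := by exact_mod_cast h1
      _ = Nr := by push_cast; rfl
  have hδ1 : δ ≤ 1 := by
    rw [hcard] at hcardle; nlinarith
  -- indicator and line-parametrization
  set ind : (Fin d → ZMod p) → ℝ := fun x => if x ∈ A then 1 else 0 with hind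
  have hind_sq : ∀ x, ind x * ind x = ind x := by
    intro x; by_cases hx : x ∈ A <;> simp [hind, hx]
  set e : ZMod p → (Fin d → ZMod p) → (Fin d → ZMod p) → (Fin d → ZMod p) :=
    fun u b c => fun i => u * b i + c i with he
  set a : ℝ := (A.ncard : ℝ) with ha
  have hsum_ind : ∑ x, ind x = a := by
    rw [hind, Finset.sum_boole, ha]
    congr 1
    rw [Set.ncard_eq_toFinset_card']
    congr 1
    ext x; simp
  have hF1 : ∀ (u : ZMod p) (b : Fin d → ZMod p), ∑ c, ind (e u b c) = a := by
    intro u b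
    have h1 : ∑ c, ind (e u b c) = ∑ c, ind ((Equiv.addLeft (fun i => u * b i)) c) := rfl
    rw [h1, Equiv.sum_comp (Equiv.addLeft (fun i => u * b i)) ind, hsum_ind]
  have hF2 : ∀ (u : ZMod p) (b : Fin d → ZMod p), ∑ c, ind (e u b c) * ind (e u b c) = a := by
    intro u b; simp_rw [hind_sq]; exact hF1 u b
  have hF3 : ∀ u v : ZMod p, u ≠ v →
      ∑ b, ∑ c, ind (e u b c) * ind (e v b c) = a ^ 2 := by
    intro u v huv
    have hbij : Function.Bijective (fun bc : (Fin d → ZMod p) × (Fin d → ZMod p) =>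
        (e u bc.1 bc.2, e v bc.1 bc.2)) := by
      rw [Fintype.bijective_iff_injective_and_card]
      refine ⟨?_, rfl⟩
      rintro ⟨b, c⟩ ⟨b', c'⟩ hbc
      simp only [Prod.mk.injEq] at hbc
      obtain ⟨h1, h2⟩ := hbc
      have hb : b = b' := by
        funext i
        have e1 := congrFun h1 i
        have e2 := congrFun h2 i
        simp only [he] at e1 e2
        have h3 : (u - v) * b i = (u - v) * b' i := by linear_combination e1 - e2
        exact mul_left_cancel₀ (sub_ne_zero.mpr huv) h3
      have hc : c = c' := by
        funext i
        have e1 := congrFun h1 i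
        simp only [he] at e1
        have h4 := congrFun hb i
        linear_combination e1 - u * h4
      simp [hb, hc]
    calc ∑ b, ∑ c, ind (e u b c) * ind (e v b c)
        = ∑ bc : (Fin d → ZMod p) × (Fin d → ZMod p), ind (e u bc.1 bc.2) * ind (e v bc.1 bc.2) := by
          rw [← Fintype.sum_prod_type']
      _ = ∑ xy : (Fin d → ZMod p) × (Fin d → ZMod p), ind xy.1 * ind xy.2 :=
          Fintype.sum_bijective _ hbij _ _ (fun bc => rfl)
      _ = ∑ x, ∑ y, ind x * ind y := Fintype.sum_prod_type' (fun x y => ind x * ind y)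
      _ = (∑ x, ind x) * (∑ y, ind y) := (Finset.sum_mul_sum _ _ _ _).symm
      _ = a ^ 2 := by rw [hsum_ind]; ring
  have hF3' : ∀ u v : ZMod p, u ≠ v →
      ∑ b ∈ Finset.univ.erase 0, ∑ c, ind (e u b c) * ind (e v b c) = a ^ 2 - a := by
    intro u v huv
    have h0 : ∑ c, ind (e u 0 c) * ind (e v 0 c) = a := by
      have hz : ∀ (w : ZMod p) (c : Fin d → ZMod p), e w 0 c = c := by
        intro w c; funext i; simp [he]
      simp_rw [hz, hind_sq]
      exact hsum_ind
    have hsplit := Finset.add_sum_erase Finset.univ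
      (fun b => ∑ c, ind (e u b c) * ind (e v b c)) (Finset.mem_univ 0)
    rw [h0] at hsplit
    have := hF3 u v huv
    linarith
  set h : (Fin d → ZMod p) → (Fin d → ZMod p) → ℝ := fun b c => ∑ u : ZMod p, ind (e u b c) with hh
  have hsum_h : ∀ b, ∑ c, h b c = q * a := by
    intro b
    simp only [hh]
    rw [Finset.sum_comm]
    simp_rw [hF1]
    rw [Finset.sum_const, nsmul_eq_mul, hcardZR]
  have hsq2 : ∀ b c, (h b c)^2 = ∑ u, ∑ v, ind (e u b c) * ind (e v b c) := by
    intro b c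
    simp only [hh, sq]
    exact Finset.sum_mul_sum _ _ _ _
  have hsum_h2 : ∑ b ∈ Finset.univ.erase 0, ∑ c, (h b c)^2
      = (Nr - 1) * (q * a) + q * (q - 1) * (a ^ 2 - a) := by
    have s1 : ∀ b : Fin d → ZMod p, ∑ c, ∑ u, ∑ v, ind (e u b c) * ind (e v b c)
        = ∑ u, ∑ v, ∑ c, ind (e u b c) * ind (e v b c) := by
      intro b
      rw [Finset.sum_comm]
      exact Finset.sum_congr rfl fun u _ => Finset.sum_comm
    have hswap : ∑ b ∈ Finset.univ.erase 0, ∑ c, (h b c)^2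
        = ∑ u, ∑ v, ∑ b ∈ Finset.univ.erase 0, ∑ c, ind (e u b c) * ind (e v b c) := by
      simp_rw [hsq2]
      calc ∑ b ∈ Finset.univ.erase 0, ∑ c, ∑ u, ∑ v, ind (e u b c) * ind (e v b c)
          = ∑ b ∈ Finset.univ.erase 0, ∑ u, ∑ v, ∑ c, ind (e u b c) * ind (e v b c) :=
            Finset.sum_congr rfl fun b _ => s1 b
        _ = ∑ u, ∑ b ∈ Finset.univ.erase 0, ∑ v, ∑ c, ind (e u b c) * ind (e v b c) :=
            Finset.sum_comm
        _ = ∑ u, ∑ v, ∑ b ∈ Finset.univ.erase 0, ∑ c, ind (e u b c) * ind (e v b c) :=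
            Finset.sum_congr rfl fun u _ => Finset.sum_comm
    have hval : ∀ u : ZMod p, ∑ v, ∑ b ∈ Finset.univ.erase 0, ∑ c, ind (e u b c) * ind (e v b c)
        = (Nr - 1) * a + (q - 1) * (a ^ 2 - a) := by
      intro u
      rw [← Finset.add_sum_erase Finset.univ _ (Finset.mem_univ u)]
      congr 1
      · simp_rw [hF2]
        rw [Finset.sum_const, nsmul_eq_mul, hcardEraseR]
      · rw [Finset.sum_congr rfl fun v hv => hF3' u v (Ne.symm (Finset.ne_of_mem_erase hv))]
        rw [Finset.sum_const, nsmul_eq_mul, hcardZEraseR]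
    rw [hswap, Finset.sum_congr rfl fun u _ => hval u, Finset.sum_const, nsmul_eq_mul, hcardZR]
    ring
  have hTclosed : ∑ b ∈ Finset.univ.erase 0, ∑ c, (h b c - δ * q)^2
      = (Nr - 1) * (q * a) + q * (q - 1) * (a ^ 2 - a)
        - 2 * (δ * q) * ((Nr - 1) * (q * a)) + (Nr - 1) * Nr * (δ * q)^2 := by
    have h1 : ∀ b : Fin d → ZMod p, ∑ c, (h b c - δ * q)^2
        = (∑ c, (h b c)^2) - 2 * (δ * q) * (q * a) + Nr * (δ * q)^2 := by
      intro b
      calc ∑ c, (h b c - δ * q)^2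
          = ∑ c, ((h b c)^2 - 2 * (δ * q) * (h b c) + (δ * q)^2) := by
            apply Finset.sum_congr rfl; intros; ring
        _ = (∑ c, (h b c)^2) - 2 * (δ * q) * (∑ c, h b c)
              + ((Finset.univ : Finset (Fin d → ZMod p)).card : ℝ) * (δ * q)^2 := by
            rw [Finset.sum_add_distrib, Finset.sum_sub_distrib, ← Finset.mul_sum,
              Finset.sum_const, nsmul_eq_mul]
        _ = _ := by rw [hsum_h b, Finset.card_univ, hcardΩR]
    rw [Finset.sum_congr rfl fun b _ => h1 b, Finset.sum_add_distrib, Finset.sum_sub_distrib,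
      hsum_h2, Finset.sum_const, Finset.sum_const, nsmul_eq_mul, nsmul_eq_mul, hcardEraseR]
    ring
  have hNr0 : (0:ℝ) < Nr := by linarith
  have hupper : (Nr - 1) * (q * a) + q * (q - 1) * (a ^ 2 - a)
      - 2 * (δ * q) * ((Nr - 1) * (q * a)) + (Nr - 1) * Nr * (δ * q)^2
      ≤ (Nr - 1) * Nr * (δ * q) := by
    rw [hcard]
    have t1 : 0 ≤ δ * Nr * q * (q - 1) := by
      apply mul_nonneg (mul_nonneg (mul_nonneg hδ0.le hNr0.le) hq0.le); linarith
    have t2 : 0 ≤ δ ^ 2 * Nr * q * (Nr - q) := by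
      apply mul_nonneg (mul_nonneg (mul_nonneg (sq_nonneg δ) hNr0.le) hq0.le); linarith
    nlinarith [t1, t2]
  have hex : ∃ b ∈ Finset.univ.erase (0 : Fin d → ZMod p), ∃ c : Fin d → ZMod p,
      (h b c - δ * q)^2 ≤ δ * q := by
    by_contra hcon
    push_neg at hcon
    have hne2 : (Finset.univ : Finset (Fin d → ZMod p)).Nonempty := Finset.univ_nonempty
    have hne1 : (Finset.univ.erase (0 : Fin d → ZMod p)).Nonempty := by
      rw [← Finset.card_pos, Finset.card_erase_of_mem (Finset.mem_univ 0),
        Finset.card_univ, hcardΩ]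
      have h9 : 1 < p ^ d := Nat.one_lt_pow (by omega) hp.one_lt
      omega
    have hstep : ∀ b ∈ Finset.univ.erase (0 : Fin d → ZMod p),
        Nr * (δ * q) < ∑ c, (h b c - δ * q)^2 := by
      intro b hb
      have h2 := Finset.sum_lt_sum_of_nonempty hne2 (fun c _ => hcon b hb c)
      rwa [Finset.sum_const, nsmul_eq_mul, Finset.card_univ, hcardΩR] at h2
    have h3 := Finset.sum_lt_sum_of_nonempty hne1 hstep
    rw [Finset.sum_const, nsmul_eq_mul, hcardEraseR, hTclosed] at h3
    have h4 : (Nr - 1) * (Nr * (δ * q)) = (Nr - 1) * Nr * (δ * q) := by ring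
    linarith
  obtain ⟨b, hb, c, hbc⟩ := hex
  have hb0 : b ≠ 0 := Finset.ne_of_mem_erase hb
  refine ⟨b, c, hb0, ?_⟩
  have hinj : Function.Injective (fun u : ZMod p => e u b c) := by
    intro u u' huu
    obtain ⟨i, hbi⟩ : ∃ i, b i ≠ 0 := by
      by_contra hall
      push_neg at hall
      exact hb0 (funext hall)
    have h5 := congrFun huu i
    simp only [he] at h5
    have h6 : u * b i = u' * b i := by linear_combination h5
    exact mul_right_cancel₀ hbi h6
  have himg : A ∩ {x | ∃ u : ZMod p, x = fun i => u * b i + c i}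
      = (fun u : ZMod p => e u b c) '' {u : ZMod p | e u b c ∈ A} := by
    ext x
    simp only [Set.mem_inter_iff, Set.mem_setOf_eq, Set.mem_image, he]
    constructor
    · rintro ⟨hxA, u, rfl⟩
      exact ⟨u, hxA, rfl⟩
    · rintro ⟨u, huA, rfl⟩
      exact ⟨huA, u, rfl⟩
  have hnc : ((A ∩ {x | ∃ u : ZMod p, x = fun i => u * b i + c i}).ncard : ℝ) = h b c := by
    rw [himg, Set.ncard_image_of_injective _ hinj]
    have hseteq : {u : ZMod p | e u b c ∈ A} = ↑(Finset.univ.filter (fun u => e u b c ∈ A)) := by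
      ext u; simp
    rw [hseteq, Set.ncard_coe_finset]
    simp only [hh, hind]
    rw [Finset.sum_boole]
  rw [hnc]
  have habs : |h b c - δ * q| ≤ Real.sqrt (δ * q) := by
    rw [← Real.sqrt_sq_eq_abs]
    exact Real.sqrt_le_sqrt hbc
  have hsqrt : Real.sqrt (δ * q) = δ ^ ((1:ℝ)/2) * q ^ ((1:ℝ)/2) := by
    rw [Real.sqrt_mul hδ0.le, Real.sqrt_eq_rpow, Real.sqrt_eq_rpow]
  have hnn : 0 ≤ δ ^ ((1:ℝ)/2) + q ^ (-(1:ℝ)/2) :=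
    add_nonneg (Real.rpow_nonneg hδ0.le _) (Real.rpow_nonneg hq0.le _)
  calc |h b c - δ * q| ≤ Real.sqrt (δ * q) := habs
    _ = δ ^ ((1:ℝ)/2) * q ^ ((1:ℝ)/2) := hsqrt
    _ ≤ δ ^ ((1:ℝ)/2) * q ^ ((1:ℝ)/2) + 1 * (δ ^ ((1:ℝ)/2) + q ^ (-(1:ℝ)/2)) := by linarith
end

section
/- Let p be a prime, d ≥ 1, f : (ℤ/pℤ)^d → ℂ, and let l ⊂ (ℤ/pℤ)^d be a line parametrized as l = {ub + c : u ∈ ℤ/pℤ} with b ≠ 0. Define the restriction f_l : ℤ/pℤ → ℂ by f_l(u) = f(ub + c). Then ‖f̂‖₁ ≥ ‖f̂_l‖₁. -/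
open scoped BigOperators

section EC

variable (p : ℕ) [Fact p.Prime]

noncomputable def ec (a : ZMod p) : ℂ :=
  Complex.exp (-(2 * Real.pi * Complex.I) * (a.val : ℂ) / p)

lemma ec_zero : ec p 0 = 1 := by
  simp [ec]

lemma ec_add (a b : ZMod p) : ec p (a + b) = ec p a * ec p b := by
  have hp : (p : ℂ) ≠ 0 := Nat.cast_ne_zero.2 (Fact.out (p := p.Prime)).ne_zero
  set m : ℕ := (a.val + b.val) / p with hm
  have hv : (a.val : ℂ) + b.val = ((a + b).val : ℂ) + p * m := by
    have h : a.val + b.val = (a + b).val + p * m := by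
      rw [ZMod.val_add]; exact (Nat.mod_add_div _ _).symm
    exact_mod_cast congrArg (Nat.cast : ℕ → ℂ) h
  rw [ec, ec, ec, ← Complex.exp_add]
  have key : -(2 * Real.pi * Complex.I) * (a.val : ℂ) / p
        + -(2 * Real.pi * Complex.I) * (b.val : ℂ) / p
      = -(2 * Real.pi * Complex.I) * ((a + b).val : ℂ) / p
        + (↑(-(m : ℤ)) : ℂ) * (2 * Real.pi * Complex.I) := by
    have h2 : (↑(-(m : ℤ)) : ℂ) = -(m : ℂ) := by push_cast; ring
    rw [h2, ← add_div, ← mul_add, hv]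
    field_simp
    ring
  rw [key, Complex.exp_add, Complex.exp_int_mul_two_pi_mul_I, mul_one]

lemma ec_abs (a : ZMod p) : ‖ec p a‖ = 1 := by
  rw [ec]
  rw [show -(2 * Real.pi * Complex.I) * (a.val : ℂ) / p
      = (-(2 * Real.pi * a.val / p) : ℝ) * Complex.I by push_cast; ring]
  exact Complex.norm_exp_ofReal_mul_I _

lemma ec_one_ne_one : ec p 1 ≠ 1 := by
  have hp2 : 2 ≤ p := (Fact.out (p := p.Prime)).two_le
  have hp : (p : ℂ) ≠ 0 := Nat.cast_ne_zero.2 (by omega)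
  have : Fact (1 < p) := ⟨by omega⟩
  rw [ec, ZMod.val_one]
  intro h
  rw [Complex.exp_eq_one_iff] at h
  obtain ⟨n, hn⟩ := h
  have h2 : (2 * (Real.pi : ℂ) * Complex.I) ≠ 0 := by
    simp [Complex.I_ne_zero, Real.pi_ne_zero, Complex.ofReal_ne_zero]
  have h5 : ((n : ℂ) * p) * (2 * Real.pi * Complex.I) = (-1 : ℂ) * (2 * Real.pi * Complex.I) := by
    field_simp at hn
    linear_combination (-(2 * Real.pi * Complex.I)) * hn
  have h3 : (n : ℂ) * p = -1 := by simpa using mul_right_cancel₀ h2 h5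
  have h6 : ((n * p : ℤ) : ℂ) = ((-1 : ℤ) : ℂ) := by push_cast; exact h3
  have h7 : n * (p : ℤ) = -1 := by exact_mod_cast h6
  have h8 : (p : ℤ) ∣ 1 := ⟨-n, by linarith⟩
  have := Int.le_of_dvd one_pos h8
  omega

lemma sum_ec_all : ∑ x : ZMod p, ec p x = 0 := by
  have h := ec_one_ne_one p
  have key : ec p 1 * ∑ x : ZMod p, ec p x = ∑ x : ZMod p, ec p x := by
    rw [Finset.mul_sum]
    simp_rw [← ec_add]
    exact Fintype.sum_equiv (Equiv.addLeft (1 : ZMod p)) _ _ fun x => rfl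
  rcases mul_eq_zero.1
      (by linear_combination key : (ec p 1 - 1) * ∑ x : ZMod p, ec p x = 0) with h1 | h2
  · exact absurd (sub_eq_zero.1 h1) h
  · exact h2

lemma sum_ec_mul (a : ZMod p) :
    ∑ x : ZMod p, ec p (x * a) = if a = 0 then (p : ℂ) else 0 := by
  by_cases ha : a = 0
  · simp [ha, ec_zero, Finset.card_univ, ZMod.card]
  · rw [if_neg ha]
    have : ∑ x : ZMod p, ec p (x * a) = ∑ x : ZMod p, ec p x := by
      simp_rw [mul_comm]
      exact Fintype.sum_equiv (Equiv.mulLeft₀ a ha) _ _ fun x => rfl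
    rw [this, sum_ec_all]

lemma ec_finsum {ι : Type} (s : Finset ι) (g : ι → ZMod p) :
    ec p (∑ i ∈ s, g i) = ∏ i ∈ s, ec p (g i) := by
  classical
  induction s using Finset.cons_induction with
  | empty => simpa using ec_zero p
  | cons a s ha ih => rw [Finset.sum_cons, Finset.prod_cons, ec_add, ih]

lemma sum_ec_vec (d : ℕ) (z : Fin d → ZMod p) :
    ∑ ξ : Fin d → ZMod p, ec p (∑ i, ξ i * z i) = if z = 0 then ((p : ℂ)) ^ d else 0 := by
  simp_rw [ec_finsum]
  rw [← Fintype.piFinset_univ, Finset.sum_prod_piFinset Finset.univ (fun i t => ec p (t * z i))]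
  simp_rw [sum_ec_mul]
  by_cases hz : z = 0
  · simp [hz]
  · rw [if_neg hz]
    obtain ⟨i, hi⟩ := Function.ne_iff.1 hz
    exact Finset.prod_eq_zero (Finset.mem_univ i) (if_neg hi)

end EC


section Aux

variable (p : ℕ) [Fact p.Prime]

lemma ftd_def {d : ℕ} (f : (Fin d → ZMod p) → ℂ) (ξ : Fin d → ZMod p) :
    ftd f ξ = ((p : ℂ) ^ d)⁻¹ * ∑ x : Fin d → ZMod p, f x * ec p (∑ i, ξ i * x i) := rfl

lemma ft1_def (g : ZMod p → ℂ) (η : ZMod p) :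
    ft1 g η = (p : ℂ)⁻¹ * ∑ u : ZMod p, g u * ec p (η * u) := rfl

lemma sum_ec_mul' (a : ZMod p) :
    ∑ x : ZMod p, ec p (a * x) = if a = 0 then (p : ℂ) else 0 := by
  simp_rw [mul_comm a]
  exact sum_ec_mul p a

lemma ftd_inv {d : ℕ} (f : (Fin d → ZMod p) → ℂ) (y : Fin d → ZMod p) :
    ∑ ξ : Fin d → ZMod p, ftd f ξ * ec p (-(∑ i, ξ i * y i)) = f y := by
  have hpd : ((p : ℂ)) ^ d ≠ 0 :=
    pow_ne_zero _ (Nat.cast_ne_zero.2 (Fact.out (p := p.Prime)).ne_zero)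
  have h1 : ∀ ξ x : Fin d → ZMod p,
      ec p (∑ i, ξ i * x i) * ec p (-(∑ i, ξ i * y i)) = ec p (∑ i, ξ i * (x i - y i)) := by
    intro ξ x
    rw [← ec_add]
    congr 1
    rw [← Finset.sum_neg_distrib, ← Finset.sum_add_distrib]
    exact Finset.sum_congr rfl fun i _ => by ring
  calc ∑ ξ : Fin d → ZMod p, ftd f ξ * ec p (-(∑ i, ξ i * y i))
      = ∑ ξ : Fin d → ZMod p, ((p:ℂ)^d)⁻¹ * ∑ x, f x * ec p (∑ i, ξ i * (x i - y i)) := by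
        refine Finset.sum_congr rfl fun ξ _ => ?_
        rw [ftd_def, mul_assoc, Finset.sum_mul]
        congr 1
        refine Finset.sum_congr rfl fun x _ => ?_
        rw [mul_assoc, h1]
    _ = ((p:ℂ)^d)⁻¹ * ∑ x, f x * ∑ ξ : Fin d → ZMod p, ec p (∑ i, ξ i * (x i - y i)) := by
        rw [← Finset.mul_sum, Finset.sum_comm]
        congr 1
        refine Finset.sum_congr rfl fun x _ => (Finset.mul_sum _ _ _).symm
    _ = ((p:ℂ)^d)⁻¹ * ∑ x, f x * (if x = y then ((p:ℂ))^d else 0) := by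
        congr 1
        refine Finset.sum_congr rfl fun x _ => ?_
        rw [sum_ec_vec]
        congr 1
        refine if_congr ?_ rfl rfl
        constructor
        · intro h; funext i; have := congrFun h i; simpa [sub_eq_zero] using this
        · rintro rfl; funext i; simp
    _ = f y := by
        simp_rw [mul_ite, mul_zero, Finset.sum_ite_eq' Finset.univ y]
        simp only [Finset.mem_univ, if_true]
        field_simp

lemma ft1_line {d : ℕ} (f : (Fin d → ZMod p) → ℂ) (b c : Fin d → ZMod p) (η : ZMod p) :
    ft1 (fun u : ZMod p => f (fun i => u * b i + c i)) η
      = ∑ ξ : Fin d → ZMod p,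
          if (∑ i, ξ i * b i) = η then ftd f ξ * ec p (-(∑ i, ξ i * c i)) else 0 := by
  have hp : (p : ℂ) ≠ 0 := Nat.cast_ne_zero.2 (Fact.out (p := p.Prime)).ne_zero
  rw [ft1_def]
  calc (p:ℂ)⁻¹ * ∑ u : ZMod p, f (fun i => u * b i + c i) * ec p (η * u)
      = (p:ℂ)⁻¹ * ∑ u : ZMod p, ∑ ξ : Fin d → ZMod p,
          ftd f ξ * ec p (-(∑ i, ξ i * c i)) * ec p ((η - ∑ i, ξ i * b i) * u) := by
        congr 1
        refine Finset.sum_congr rfl fun u _ => ?_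
        rw [← ftd_inv p f (fun i => u * b i + c i), Finset.sum_mul]
        refine Finset.sum_congr rfl fun ξ _ => ?_
        rw [mul_assoc, mul_assoc]
        congr 1
        rw [← ec_add, ← ec_add]
        congr 1
        have hsum : ∑ i, ξ i * (u * b i + c i)
            = u * (∑ i, ξ i * b i) + ∑ i, ξ i * c i := by
          rw [Finset.mul_sum, ← Finset.sum_add_distrib]
          exact Finset.sum_congr rfl fun i _ => by ring
        rw [hsum]; ring
    _ = ∑ ξ : Fin d → ZMod p, ftd f ξ * ec p (-(∑ i, ξ i * c i))
          * ((p:ℂ)⁻¹ * ∑ u : ZMod p, ec p ((η - ∑ i, ξ i * b i) * u)) := by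
        rw [Finset.sum_comm, Finset.mul_sum]
        refine Finset.sum_congr rfl fun ξ _ => ?_
        rw [Finset.mul_sum, Finset.mul_sum, Finset.mul_sum]
        exact Finset.sum_congr rfl fun u _ => by ring
    _ = ∑ ξ : Fin d → ZMod p,
          if (∑ i, ξ i * b i) = η then ftd f ξ * ec p (-(∑ i, ξ i * c i)) else 0 := by
        refine Finset.sum_congr rfl fun ξ _ => ?_
        rw [sum_ec_mul']
        by_cases h : (∑ i, ξ i * b i) = η
        · rw [if_pos h, if_pos (by rw [h, sub_self])]
          field_simp
        · rw [if_neg h, if_neg (fun hc => h (by linear_combination -hc)), mul_zero, mul_zero]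

end Aux

/-- Let `p` be a prime, `d ≥ 1`, `f : (ZMod p)^d → ℂ`, and
`l = {ub + c : u ∈ ZMod p}` a line (`b ≠ 0`). Then the restriction
`f_l(u) = f(ub + c)` satisfies `‖f̂‖₁ ≥ ‖f̂_l‖₁`. -/
theorem stmt14 (p : ℕ) [Fact p.Prime] (d : ℕ) (hd : 1 ≤ d)
    (f : (Fin d → ZMod p) → ℂ) (b c : Fin d → ZMod p) (hb : b ≠ 0) :
    wiener1 (fun u : ZMod p => f (fun i => u * b i + c i)) ≤ wienerd f := by
  unfold wiener1 wienerd
  calc ∑ η : ZMod p, ‖ft1 (fun u : ZMod p => f (fun i => u * b i + c i)) η‖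
      = ∑ η : ZMod p, ‖∑ ξ : Fin d → ZMod p,
          if (∑ i, ξ i * b i) = η then ftd f ξ * ec p (-(∑ i, ξ i * c i)) else 0‖ := by
        refine Finset.sum_congr rfl fun η _ => ?_
        rw [ft1_line]
    _ ≤ ∑ η : ZMod p, ∑ ξ : Fin d → ZMod p,
          (if (∑ i, ξ i * b i) = η then ‖ftd f ξ‖ else 0) := by
        refine Finset.sum_le_sum fun η _ => ?_
        refine le_trans (norm_sum_le _ _) (le_of_eq ?_)
        refine Finset.sum_congr rfl fun ξ _ => ?_
        rw [apply_ite (‖·‖), norm_zero, norm_mul, ec_abs, mul_one]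
    _ = ∑ ξ : Fin d → ZMod p, ‖ftd f ξ‖ := by
        rw [Finset.sum_comm]
        refine Finset.sum_congr rfl fun ξ _ => ?_
        rw [Finset.sum_ite_eq Finset.univ (∑ i, ξ i * b i) (fun _ => ‖ftd f ξ‖)]
        simp
end

section
/- Let p be a prime, d ≥ 1, and A ⊆ (ℤ/pℤ)^d with |A| < (2p)^{1/2}. Then there exists an invertible linear map T : (ℤ/pℤ)^d → (ℤ/pℤ)^d such that the first coordinates of the elements T(a), a ∈ A, are pairwise distinct. -/
open Finset in
lemma stmt16_hyper (p : ℕ) [Fact p.Prime] (d : ℕ) (v : Fin d → ZMod p) (hv : v ≠ 0) :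
    (Finset.univ.filter (fun c : Fin d → ZMod p => ∑ k, c k * v k = 0)).card * p = p ^ d := by
  classical
  let K := ZMod p
  let ψ : (Fin d → K) →ₗ[K] K :=
    { toFun := fun c => ∑ k, c k * v k
      map_add' := by intro a b; simp [add_mul, Finset.sum_add_distrib]
      map_smul' := by intro m a; simp [Finset.mul_sum, mul_assoc]; rw [Finset.mul_sum] }
  have hψ : ∀ c, ψ c = ∑ k, c k * v k := fun c => rfl
  obtain ⟨i, hi⟩ : ∃ i, v i ≠ 0 := by
    by_contra h
    push_neg at h
    exact hv (funext fun j => h j)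
  have hsurj : Function.Surjective ψ := by
    intro t
    refine ⟨Pi.single i ((v i)⁻¹ * t), ?_⟩
    rw [hψ, Finset.sum_eq_single i]
    · rw [Pi.single_eq_same, inv_mul_eq_div]; exact div_mul_cancel₀ t hi
    · intro b _ hb; simp [Pi.single_apply, hb]
    · simp
  have hrange : LinearMap.range ψ = ⊤ := LinearMap.range_eq_top.mpr hsurj
  have hfr : Module.finrank K (LinearMap.ker ψ) + 1 = d := by
    have := LinearMap.finrank_range_add_finrank_ker ψ
    rw [hrange] at this
    simp [Module.finrank_pi] at this
    omega
  have hcard : Fintype.card (LinearMap.ker ψ) = p ^ (Module.finrank K (LinearMap.ker ψ)) := by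
    have := Module.card_eq_pow_finrank (K := K) (V := LinearMap.ker ψ)
    rwa [ZMod.card] at this
  have h2 : (Finset.univ.filter (fun c : Fin d → ZMod p => ∑ k, c k * v k = 0)).card
      = Fintype.card (LinearMap.ker ψ) := by
    rw [← Fintype.card_subtype]
    exact (Fintype.card_congr (Equiv.subtypeEquivRight (fun c => by
      simp [LinearMap.mem_ker, hψ]))).symm
  rw [h2, hcard, ← pow_succ, hfr]

open Finset in
lemma stmt16_exists_c (p : ℕ) [Fact p.Prime] (d : ℕ)
    (A : Set (Fin d → ZMod p)) (h2 : A.ncard ^ 2 < 2 * p) :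
    ∃ c : Fin d → ZMod p, ∀ a ∈ A, ∀ b ∈ A, a ≠ b →
      ∑ k, c k * a k ≠ ∑ k, c k * b k := by
  classical
  have hp : 0 < p := (Fact.out : p.Prime).pos
  have hAfin : A.Finite := Set.toFinite A
  set F : Finset (Fin d → ZMod p) := hAfin.toFinset with hF
  have hFA : F.card = A.ncard := (Set.ncard_eq_toFinset_card A hAfin).symm
  set rk : (Fin d → ZMod p) → ℕ := fun x => ((Fintype.equivFin _) x : ℕ) with hrk
  have hrkinj : Function.Injective rk := fun a b h =>
    (Fintype.equivFin _).injective (Fin.val_injective h)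
  set L := F.offDiag.filter (fun q => rk q.1 < rk q.2) with hL
  set G := F.offDiag.filter (fun q => ¬ rk q.1 < rk q.2) with hG
  have hLG : L.card + G.card = F.offDiag.card :=
    Finset.card_filter_add_card_filter_not _
  have hGL : G.card = L.card := by
    apply Finset.card_bij (fun q _ => q.swap)
    · rintro ⟨a, b⟩ hq
      simp only [hG, hL, Finset.mem_filter, Finset.mem_offDiag, Prod.fst_swap, Prod.snd_swap] at hq ⊢
      refine ⟨⟨hq.1.2.1, hq.1.1, (Ne.symm hq.1.2.2)⟩, ?_⟩
      have : rk b ≠ rk a := fun h => hq.1.2.2 (hrkinj h).symm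
      omega
    · rintro ⟨a, b⟩ _ ⟨a', b'⟩ _ h
      simpa [Prod.ext_iff, and_comm] using h
    · rintro ⟨a, b⟩ hq
      refine ⟨(b, a), ?_, rfl⟩
      simp only [hG, hL, Finset.mem_filter, Finset.mem_offDiag] at hq ⊢
      exact ⟨⟨hq.1.2.1, hq.1.1, Ne.symm hq.1.2.2⟩, by omega⟩
  have hLp : L.card < p := by
    have hod : F.offDiag.card = F.card * F.card - F.card := Finset.offDiag_card F
    have : 2 * L.card < 2 * p := by
      have h1 : F.card * F.card - F.card ≤ A.ncard ^ 2 := by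
        rw [hFA] at *; nlinarith [Nat.sub_le (A.ncard * A.ncard) A.ncard]
      omega
    omega
  set Bad := L.biUnion (fun q => Finset.univ.filter
    (fun c : Fin d → ZMod p => ∑ k, c k * (q.1 k - q.2 k) = 0)) with hBad
  have hBcard : Bad.card < p ^ d := by
    have h1 : Bad.card ≤ ∑ q ∈ L, (Finset.univ.filter
        (fun c : Fin d → ZMod p => ∑ k, c k * (q.1 k - q.2 k) = 0)).card :=
      Finset.card_biUnion_le
    have h2 : Bad.card * p ≤ L.card * p ^ d := by
      calc Bad.card * p ≤ (∑ q ∈ L, (Finset.univ.filter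
            (fun c : Fin d → ZMod p => ∑ k, c k * (q.1 k - q.2 k) = 0)).card) * p :=
          Nat.mul_le_mul_right _ h1
        _ = ∑ q ∈ L, ((Finset.univ.filter
            (fun c : Fin d → ZMod p => ∑ k, c k * (q.1 k - q.2 k) = 0)).card * p) := by
          rw [Finset.sum_mul]
        _ = ∑ q ∈ L, p ^ d := by
          apply Finset.sum_congr rfl
          rintro ⟨a, b⟩ hq
          simp only [hL, Finset.mem_filter, Finset.mem_offDiag] at hq
          exact stmt16_hyper p d _ (sub_ne_zero.mpr hq.1.2.2)
        _ = L.card * p ^ d := by rw [Finset.sum_const, smul_eq_mul]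
    have h3 : L.card * p ^ d < p * p ^ d :=
      (Nat.mul_lt_mul_right (pow_pos hp d)).mpr hLp
    have h4 : Bad.card * p < p ^ d * p := by
      rw [mul_comm (p^d) p]; exact lt_of_le_of_lt h2 h3
    exact lt_of_mul_lt_mul_right h4 (Nat.zero_le p)
  obtain ⟨c, hc⟩ : ∃ c : Fin d → ZMod p, c ∉ Bad := by
    by_contra h
    push_neg at h
    have : Bad = Finset.univ := Finset.eq_univ_iff_forall.mpr h
    rw [this] at hBcard
    simp [Finset.card_univ, ZMod.card] at hBcard
  refine ⟨c, ?_⟩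
  have key : ∀ a ∈ A, ∀ b ∈ A, rk a < rk b → ∑ k, c k * a k ≠ ∑ k, c k * b k := by
    intro a ha b hb hab heq
    apply hc
    rw [hBad, Finset.mem_biUnion]
    refine ⟨(a, b), ?_, ?_⟩
    · simp only [hL, Finset.mem_filter, Finset.mem_offDiag, hF, Set.Finite.mem_toFinset]
      exact ⟨⟨ha, hb, fun h => by subst h; omega⟩, hab⟩
    · simp only [Finset.mem_filter, Finset.mem_univ, true_and, mul_sub,
        Finset.sum_sub_distrib, heq, sub_self]
  intro a ha b hb hab
  rcases lt_or_gt_of_ne (fun h : rk a = rk b => hab (hrkinj h)) with h | h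
  · exact key a ha b hb h
  · exact fun heq => key b hb a ha h heq.symm



/-- Let `p` be a prime, `d ≥ 1`, and `A ⊆ (ZMod p)^d` with
`|A| < √(2p)`. Then there exists an invertible linear map `T` of `(ZMod p)^d` such
that the first coordinates of the elements `T(a)`, `a ∈ A`, are pairwise distinct. -/
theorem stmt16 (p : ℕ) [Fact p.Prime] (d : ℕ) (hd : 1 ≤ d)
    (A : Set (Fin d → ZMod p)) (hA : (A.ncard : ℝ) < Real.sqrt (2 * p)) :
    ∃ T : (Fin d → ZMod p) ≃ₗ[ZMod p] (Fin d → ZMod p),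
      Set.InjOn (fun a => T a ⟨0, hd⟩) A := by
  classical
  by_cases hsub : A.Subsingleton
  · exact ⟨LinearEquiv.refl _ _, fun a ha b hb _ => hsub ha hb⟩
  -- numeric bound
  have h2 : A.ncard ^ 2 < 2 * p := by
    have h0 : (0:ℝ) ≤ (A.ncard : ℝ) := Nat.cast_nonneg _
    have := (Real.lt_sqrt h0).mp hA
    exact_mod_cast this
  obtain ⟨c, hc⟩ := stmt16_exists_c p d A h2
  -- a nonzero coefficient
  rw [Set.not_subsingleton_iff] at hsub
  obtain ⟨a0, ha0, b0, hb0, hab0⟩ := hsub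
  obtain ⟨i, hi⟩ : ∃ i, c i ≠ 0 := by
    by_contra h
    push_neg at h
    exact hc a0 ha0 b0 hb0 hab0 (by simp [h])
  set z0 : Fin d := ⟨0, hd⟩ with hz0
  set σ : Equiv.Perm (Fin d) := Equiv.swap z0 i with hσ
  set u : Fin d → ZMod p := Pi.single z0 1 with hu
  set w : Fin d → ZMod p := (fun k => c (σ k)) - u with hw
  set B : Matrix (Fin d) (Fin d) (ZMod p) := 1 + Matrix.replicateCol Unit u * Matrix.replicateRow Unit w with hB
  set P : Matrix (Fin d) (Fin d) (ZMod p) := σ.permMatrix (ZMod p) with hP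
  set M : Matrix (Fin d) (Fin d) (ZMod p) := B * P with hM
  have hdetB : B.det = c i := by
    rw [hB, Matrix.det_one_add_replicateCol_mul_replicateRow]
    rw [hw, hu]
    rw [sub_dotProduct]
    rw [dotProduct_single, dotProduct_single]
    simp [hσ, Equiv.swap_apply_left, Pi.single_apply]
  have hdet : IsUnit M.det := by
    rw [hM, Matrix.det_mul, hdetB, hP, Matrix.det_permutation]
    refine (isUnit_iff_ne_zero.mpr hi).mul ?_
    rcases Int.units_eq_one_or (Equiv.Perm.sign σ) with h | h <;> simp [h]
  have hinv := M.invertibleOfIsUnitDet hdet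
  refine ⟨M.toLinearEquiv' hinv, ?_⟩
  have hfirst : ∀ x : Fin d → ZMod p, (M.toLinearEquiv' hinv) x z0 = ∑ k, c k * x k := by
    intro x
    have h1 : (M.toLinearEquiv' hinv) x = M.mulVec x := by
      rw [← Matrix.toLin'_apply, ← Matrix.toLinearEquiv'_apply M hinv]; rfl
    rw [h1, hM, ← Matrix.mulVec_mulVec]
    have hPx : P.mulVec x = fun k => x (σ k) := by
      funext k
      rw [hP, Matrix.mulVec]
      simp only [Equiv.Perm.permMatrix, PEquiv.toMatrix_apply, Equiv.toPEquiv_apply,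
        Option.mem_some_iff, dotProduct]
      rw [Finset.sum_eq_single (σ k)]
      · simp
      · intro b _ hb; simp [Ne.symm hb]
      · simp
    rw [hPx]
    have hBrow : ∀ k, B z0 k = c (σ k) := by
      intro k
      rw [hB]
      simp only [Matrix.add_apply, Matrix.one_apply, Matrix.mul_apply, Finset.univ_unique,
        Finset.sum_singleton, Matrix.replicateCol_apply, Matrix.replicateRow_apply, hu, hw, Pi.sub_apply,
        Pi.single_apply]
      by_cases h : k = z0 <;> simp [h, eq_comm]
    have : (B.mulVec fun k => x (σ k)) z0 = ∑ k, c (σ k) * x (σ k) := by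
      rw [Matrix.mulVec, dotProduct]
      exact Finset.sum_congr rfl fun k _ => by rw [hBrow k]
    rw [this]
    exact Equiv.sum_comp σ (fun k => c k * x k)
  intro a ha b hb hab
  by_contra hne
  simp only [hfirst] at hab
  exact hc a ha b hb hne hab
end
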